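/- arXiv:2106.02391 — 3 statements merged into one kernel-verified Lean document; each statement's English description precedes it below -/
import Mathlib

section
/- Let A ∈ ℝ^{n×n}, B ∈ ℝ^{n×m}, F ∈ ℝ^{m×n}, and A_F := [[A, B], [F·A, F·B]]. Let S, H ∈ ℝ^{(n+m)×(n+m)} with S symmetric positive definite and S·A_Fᵀ = H. Then ρ(A + B·F) < 1 if and only if there exists a symmetric positive definite P ∈ ℝ^{(n+m)×(n+m)} such that Hᵀ·P·H ≺ S·P·S. -/
open Matrix

set_option linter.unusedSectionVars false
set_option maxHeartbeats 1000000

attribute [local instance] Matrix.linftyOpNormedRing Matrix.linftyOpNormedAlgebra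

section AuxGeneral

open Filter

lemma map_mul' {a b c : Type*} [Fintype b] (X : Matrix a b ℝ) (Y : Matrix b c ℝ) :
    (X * Y).map Complex.ofReal = X.map Complex.ofReal * Y.map Complex.ofReal := by
  ext i j; simp [Matrix.mul_apply, Matrix.map_apply]

lemma map_add' {a b : Type*} (X Y : Matrix a b ℝ) :
    (X + Y).map Complex.ofReal = X.map Complex.ofReal + Y.map Complex.ofReal := by
  ext i j; simp [Matrix.map_apply]

lemma real_conjTranspose {m' n' : Type*} (M : Matrix m' n' ℝ) : Mᴴ = Mᵀ := by
  ext i j; simp [Matrix.conjTranspose_apply]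

variable {N : Type*} [Fintype N] [DecidableEq N]

lemma star_real_vec (x : N → ℝ) : star x = x := funext fun i => star_trivial _

lemma dot_self_nonneg' (w : N → ℝ) : 0 ≤ w ⬝ᵥ w := by
  have := dotProduct_star_self_nonneg w
  rwa [star_real_vec] at this

lemma map_pow' (X : Matrix N N ℝ) (k : ℕ) :
    (X ^ k).map Complex.ofReal = (X.map Complex.ofReal) ^ k := by
  induction k with
  | zero => ext i j; simp [Matrix.map_apply, Matrix.one_apply]; split <;> simp
  | succ k ih => rw [pow_succ, pow_succ, map_mul', ih]

lemma map_conjTranspose' (M : Matrix N N ℝ) :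
    (M.map Complex.ofReal)ᴴ = Mᵀ.map Complex.ofReal := by
  ext i j
  simp [Matrix.conjTranspose_apply, Complex.conj_ofReal]

lemma nnnorm_map_ofReal (X : Matrix N N ℝ) : ‖X.map Complex.ofReal‖₊ = ‖X‖₊ := by
  rw [Matrix.linfty_opNNNorm_def, Matrix.linfty_opNNNorm_def]
  refine congrArg _ ?_
  funext i
  exact Finset.sum_congr rfl fun j _ => by simp [Matrix.map_apply]

lemma eig_iff {K : Type*} [Field K] (M : Matrix N N K) (μ : K) :
    μ ∈ spectrum K M ↔ ∃ v, v ≠ 0 ∧ M *ᵥ v = μ • v := by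
  rw [spectrum.mem_iff, Matrix.isUnit_iff_isUnit_det, isUnit_iff_ne_zero, not_not,
    ← Matrix.exists_mulVec_eq_zero_iff]
  have hrw : ∀ v : N → K, (algebraMap K (Matrix N N K) μ - M) *ᵥ v = μ • v - M *ᵥ v := by
    intro v
    rw [Matrix.sub_mulVec, Algebra.algebraMap_eq_smul_one, Matrix.smul_mulVec,
      Matrix.one_mulVec]
  constructor
  · rintro ⟨v, hv, h⟩
    refine ⟨v, hv, ?_⟩
    rw [hrw] at h
    rw [← sub_eq_zero]
    rw [sub_eq_zero] at h ⊢
    exact h.symm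
  · rintro ⟨v, hv, h⟩
    exact ⟨v, hv, by rw [hrw, h, sub_self]⟩

lemma spectrum_transpose {K : Type*} [Field K] (M : Matrix N N K) :
    spectrum K Mᵀ = spectrum K M := by
  ext μ
  rw [spectrum.mem_iff, spectrum.mem_iff, not_iff_not, Matrix.isUnit_iff_isUnit_det,
    Matrix.isUnit_iff_isUnit_det]
  have : algebraMap K (Matrix N N K) μ - Mᵀ = (algebraMap K (Matrix N N K) μ - M)ᵀ := by
    rw [Algebra.algebraMap_eq_smul_one, Matrix.transpose_sub, Matrix.transpose_smul,
      Matrix.transpose_one]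
  rw [this, Matrix.det_transpose]

lemma re_quad (Q : Matrix N N ℝ) (v : N → ℂ) :
    (star v ⬝ᵥ (Q.map Complex.ofReal) *ᵥ v).re =
      (fun i => (v i).re) ⬝ᵥ Q *ᵥ (fun i => (v i).re) +
      (fun i => (v i).im) ⬝ᵥ Q *ᵥ (fun i => (v i).im) := by
  simp only [dotProduct, Matrix.mulVec, Pi.star_apply, Matrix.map_apply,
    Finset.mul_sum, Finset.sum_mul]
  rw [Complex.re_sum, ← Finset.sum_add_distrib]
  refine Finset.sum_congr rfl fun i _ => ?_
  rw [Complex.re_sum, ← Finset.sum_add_distrib]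
  refine Finset.sum_congr rfl fun j _ => ?_
  simp [Complex.mul_re, Complex.mul_im, RCLike.star_def, Complex.conj_re, Complex.conj_im]

lemma re_quad_pos {Q : Matrix N N ℝ} (hQ : Q.PosDef) {v : N → ℂ} (hv : v ≠ 0) :
    0 < (star v ⬝ᵥ (Q.map Complex.ofReal) *ᵥ v).re := by
  rw [re_quad]
  set a : N → ℝ := fun i => (v i).re with ha
  set b : N → ℝ := fun i => (v i).im with hb
  have hab : a ≠ 0 ∨ b ≠ 0 := by
    by_contra h
    push_neg at h
    apply hv
    funext i
    have h1 := congrFun h.1 i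
    have h2 := congrFun h.2 i
    simp only [ha, hb] at h1 h2
    exact Complex.ext h1 h2
  have hsd := hQ.posSemidef
  rcases hab with h | h
  · have h1 := hQ.dotProduct_mulVec_pos h
    have h2 := hsd.dotProduct_mulVec_nonneg b
    rw [star_real_vec] at h1 h2
    linarith
  · have h1 := hsd.dotProduct_mulVec_nonneg a
    have h2 := hQ.dotProduct_mulVec_pos h
    rw [star_real_vec] at h1 h2
    linarith

lemma lyapunov_eig_bound {M Q : Matrix N N ℝ} (hQ : Q.PosDef)
    (hL : (Q - M * Q * Mᵀ).PosDef) {μ : ℂ} {v : N → ℂ} (hv : v ≠ 0)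
    (heig : (Mᵀ.map Complex.ofReal) *ᵥ v = μ • v) : ‖μ‖ < 1 := by
  set mc := M.map Complex.ofReal with hmc
  set Qc := Q.map Complex.ofReal with hQc
  have hmap : (M * Q * Mᵀ).map Complex.ofReal = mc * Qc * mcᵀ := by
    have key : ∀ X : Matrix N N ℝ, X.map Complex.ofReal = Complex.ofRealHom.mapMatrix X :=
      fun _ => rfl
    rw [hmc, hQc, ← Matrix.transpose_map, key, key, key, key, _root_.map_mul, _root_.map_mul]
  have hquad : star v ⬝ᵥ ((M * Q * Mᵀ).map Complex.ofReal) *ᵥ v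
      = (Complex.normSq μ : ℂ) * (star v ⬝ᵥ Qc *ᵥ v) := by
    rw [hmap]
    have h1 : (mc * Qc * mcᵀ) *ᵥ v = mc *ᵥ (Qc *ᵥ (mcᵀ *ᵥ v)) := by
      rw [← Matrix.mulVec_mulVec, ← Matrix.mulVec_mulVec]
    have hmct : mcᵀ = Mᵀ.map Complex.ofReal := by
      rw [hmc, Matrix.transpose_map]
    rw [h1, hmct, heig]
    rw [Matrix.dotProduct_mulVec (star v) mc]
    have h2 : star v ᵥ* mc = star ((Mᵀ.map Complex.ofReal) *ᵥ v) := by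
      rw [Matrix.star_mulVec, map_conjTranspose', Matrix.transpose_transpose]
    rw [h2, heig, star_smul, Matrix.mulVec_smul, smul_dotProduct,
      dotProduct_smul]
    rw [smul_smul, smul_eq_mul, RCLike.star_def, mul_comm ((starRingEnd ℂ) μ) μ,
      Complex.mul_conj]
  have hq := re_quad_pos hQ hv
  have hdiff := re_quad_pos hL hv
  have hsub : ((Q - M * Q * Mᵀ).map Complex.ofReal) = Qc - (M * Q * Mᵀ).map Complex.ofReal := by
    ext i j; simp [hQc, Matrix.map_apply]
  rw [hsub] at hdiff
  rw [Matrix.sub_mulVec, dotProduct_sub, Complex.sub_re, hquad] at hdiff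
  have hre : ((Complex.normSq μ : ℂ) * (star v ⬝ᵥ Qc *ᵥ v)).re
      = Complex.normSq μ * (star v ⬝ᵥ Qc *ᵥ v).re := by
    simp [Complex.mul_re]
  rw [hre] at hdiff
  have habs : Complex.normSq μ < 1 := by nlinarith
  have h2 : ‖μ‖ ^ 2 < 1 := by rwa [Complex.sq_norm]
  nlinarith [norm_nonneg μ]

lemma norm_pow_eventually_le {M : Matrix N N ℝ}
    (h : ∀ μ ∈ spectrum ℂ (M.map Complex.ofReal), ‖μ‖ < 1) :
    ∃ r : ℝ, 0 ≤ r ∧ r < 1 ∧ ∀ᶠ k in atTop, ‖M ^ k‖ ≤ r ^ k := by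
  haveI : CompleteSpace (Matrix N N ℂ) := FiniteDimensional.complete ℂ _
  set mc := M.map Complex.ofReal with hmc
  have hfin := Matrix.finite_spectrum (R := ℂ) mc
  set t : NNReal := hfin.toFinset.sup (fun z => ‖z‖₊) with ht
  have ht1 : t < 1 := by
    rw [ht, Finset.sup_lt_iff (by norm_num : (0 : NNReal) < 1)]
    intro z hz
    rw [Set.Finite.mem_toFinset] at hz
    have hz1 := h z hz
    rw [← NNReal.coe_lt_coe]
    simpa [coe_nnnorm] using hz1
  have hrad : spectralRadius ℂ mc ≤ (t : ENNReal) := by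
    unfold spectralRadius
    refine iSup₂_le fun z hz => ?_
    have : ‖z‖₊ ≤ t := Finset.le_sup (f := fun z => ‖z‖₊) (hfin.mem_toFinset.mpr hz)
    exact_mod_cast this
  set r : NNReal := (t + 1) / 2 with hr
  have htr : t < r := by
    rw [hr, ← NNReal.coe_lt_coe]
    push_cast
    have := t.coe_nonneg
    rw [← NNReal.coe_lt_coe] at ht1
    push_cast at ht1
    linarith
  have hr1 : r < 1 := by
    rw [hr, ← NNReal.coe_lt_coe]
    push_cast
    rw [← NNReal.coe_lt_coe] at ht1
    push_cast at ht1
    linarith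
  have hlt : spectralRadius ℂ mc < (r : ENNReal) :=
    lt_of_le_of_lt hrad (by exact_mod_cast htr)
  have hG := spectrum.pow_nnnorm_pow_one_div_tendsto_nhds_spectralRadius mc
  have hev : ∀ᶠ k : ℕ in atTop, (‖mc ^ k‖₊ : ENNReal) ^ (1 / (k : ℝ)) < (r : ENNReal) :=
    hG.eventually_lt_const hlt
  refine ⟨r, r.coe_nonneg, by exact_mod_cast hr1, ?_⟩
  filter_upwards [hev, eventually_ge_atTop 1] with k hk hk1
  have hk0 : (k : ℝ) ≠ 0 := by positivity
  have hnn : (‖mc ^ k‖₊ : ENNReal) ≤ (r : ENNReal) ^ (k : ℕ) := by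
    have h1 : (‖mc ^ k‖₊ : ENNReal) = ((‖mc ^ k‖₊ : ENNReal) ^ (1 / (k : ℝ))) ^ (k : ℝ) := by
      rw [← ENNReal.rpow_mul, one_div, inv_mul_cancel₀ hk0, ENNReal.rpow_one]
    rw [h1, ← ENNReal.rpow_natCast ((r : ENNReal)) k]
    exact ENNReal.rpow_le_rpow hk.le (Nat.cast_nonneg k)
  rw [← ENNReal.coe_pow, ENNReal.coe_le_coe] at hnn
  have hMk : ‖M ^ k‖₊ = ‖mc ^ k‖₊ := by rw [hmc, ← map_pow', nnnorm_map_ofReal]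
  calc ‖M ^ k‖ = (‖M ^ k‖₊ : ℝ) := rfl
    _ ≤ ((r ^ k : NNReal) : ℝ) := by exact_mod_cast hMk ▸ hnn
    _ = (r : ℝ) ^ k := by push_cast; ring

/-- quadratic form as a continuous linear map in the matrix argument -/
noncomputable def quadCLM (x : N → ℝ) : Matrix N N ℝ →L[ℝ] ℝ :=
  LinearMap.toContinuousLinearMap
    { toFun := fun T => x ⬝ᵥ T *ᵥ x
      map_add' := fun T U => by
        simp only [Matrix.add_mulVec, dotProduct_add]
      map_smul' := fun c T => by
        simp only [Matrix.smul_mulVec, dotProduct_smul, smul_eq_mul,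
          RingHom.id_apply] }

noncomputable def sandwichCLM (M : Matrix N N ℝ) : Matrix N N ℝ →L[ℝ] Matrix N N ℝ :=
  LinearMap.toContinuousLinearMap
    { toFun := fun T => M * T * Mᵀ
      map_add' := fun T U => by noncomm_ring
      map_smul' := fun c T => by
        simp only [RingHom.id_apply, Matrix.mul_smul, Matrix.smul_mul] }

noncomputable def transCLM : Matrix N N ℝ →L[ℝ] Matrix N N ℝ :=
  LinearMap.toContinuousLinearMap
    { toFun := fun T => Tᵀ
      map_add' := fun T U => Matrix.transpose_add T U
      map_smul' := fun c T => Matrix.transpose_smul c T }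

lemma exists_lyapunov {M : Matrix N N ℝ}
    (h : ∀ μ ∈ spectrum ℂ (M.map Complex.ofReal), ‖μ‖ < 1)
    (hT : ∀ μ ∈ spectrum ℂ (Mᵀ.map Complex.ofReal), ‖μ‖ < 1) :
    ∃ Q : Matrix N N ℝ, Q.PosDef ∧ Q - M * Q * Mᵀ = 1 := by
  haveI : CompleteSpace (Matrix N N ℝ) := FiniteDimensional.complete ℝ _
  obtain ⟨r, hr0, hr1, hev⟩ := norm_pow_eventually_le h
  obtain ⟨s, hs0, hs1, hevT⟩ := norm_pow_eventually_le hT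
  set f : ℕ → Matrix N N ℝ := fun k => M ^ k * (M ^ k)ᵀ with hf
  have hsum : Summable f := by
    refine Summable.of_norm_bounded_eventually_nat (g := fun k => (r * s) ^ k) ?_ ?_
    · exact summable_geometric_of_lt_one (by positivity) (by nlinarith)
    · filter_upwards [hev, hevT] with k h1 h2
      calc ‖f k‖ ≤ ‖M ^ k‖ * ‖(M ^ k)ᵀ‖ := norm_mul_le _ _
        _ = ‖M ^ k‖ * ‖(Mᵀ) ^ k‖ := by rw [Matrix.transpose_pow]
        _ ≤ r ^ k * s ^ k := by
            apply mul_le_mul h1 h2 (norm_nonneg _) (by positivity)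
        _ = (r * s) ^ k := by rw [mul_pow]
  set Q : Matrix N N ℝ := ∑' k, f k with hQ
  have hshift : ∀ k, M * f k * Mᵀ = f (k + 1) := by
    intro k
    show M * (M ^ k * (M ^ k)ᵀ) * Mᵀ = M ^ (k + 1) * (M ^ (k + 1))ᵀ
    rw [pow_succ', Matrix.transpose_mul]
    noncomm_ring
  have hMQM : M * Q * Mᵀ = ∑' k, f (k + 1) := by
    have h1 : M * Q * Mᵀ = sandwichCLM M Q := rfl
    rw [h1, hQ, (sandwichCLM M).map_tsum hsum]
    refine tsum_congr fun k => hshift k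
  have hQdec : Q = f 0 + ∑' k, f (k + 1) := Summable.tsum_eq_zero_add hsum
  have hf0 : f 0 = 1 := by rw [hf]; simp
  have hlyap : Q - M * Q * Mᵀ = 1 := by
    rw [hMQM, hQdec, hf0]
    abel
  have hquad : ∀ x : N → ℝ, x ⬝ᵥ Q *ᵥ x = ∑' k, x ⬝ᵥ f k *ᵥ x := by
    intro x
    have h1 : x ⬝ᵥ Q *ᵥ x = quadCLM x Q := rfl
    rw [h1, hQ, (quadCLM x).map_tsum hsum]
    rfl
  have hquadsum : ∀ x : N → ℝ, Summable (fun k => x ⬝ᵥ f k *ᵥ x) := by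
    intro x
    have := hsum.map (quadCLM x).toLinearMap.toAddMonoidHom (quadCLM x).continuous
    exact this
  have hterm_nonneg : ∀ (x : N → ℝ) (k : ℕ), 0 ≤ x ⬝ᵥ f k *ᵥ x := by
    intro x k
    rw [hf]
    simp only
    rw [← Matrix.mulVec_mulVec, Matrix.dotProduct_mulVec x (M ^ k), ← Matrix.mulVec_transpose]
    exact dot_self_nonneg' _
  have hQsym : Qᵀ = Q := by
    have h1 : Qᵀ = transCLM Q := rfl
    rw [h1, hQ, transCLM.map_tsum hsum]
    refine tsum_congr fun k => ?_
    show (f k)ᵀ = f k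
    rw [hf]
    simp only
    rw [Matrix.transpose_mul, Matrix.transpose_transpose]
  refine ⟨Q, Matrix.PosDef.of_dotProduct_mulVec_pos ?_ ?_, hlyap⟩
  · show Qᴴ = Q
    rw [real_conjTranspose, hQsym]
  · intro x hx
    rw [star_real_vec, hquad]
    have h0 : x ⬝ᵥ f 0 *ᵥ x = x ⬝ᵥ x := by rw [hf0, Matrix.one_mulVec]
    have hpos : 0 < x ⬝ᵥ f 0 *ᵥ x := by
      rw [h0]
      have := (Matrix.dotProduct_star_self_pos_iff (v := x)).mpr hx
      rwa [star_real_vec] at this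
    calc (0:ℝ) < x ⬝ᵥ f 0 *ᵥ x := hpos
      _ ≤ ∑' k, x ⬝ᵥ f k *ᵥ x := Summable.le_tsum (hquadsum x) 0 fun j _ => hterm_nonneg x j

lemma posDef_conj {P E : Matrix N N ℝ} (hP : P.PosDef) (hE : IsUnit E.det) :
    (E * P * Eᵀ).PosDef := by
  have hPt : Pᵀ = P := by
    have h2 : Pᴴ = P := hP.1
    rwa [real_conjTranspose] at h2
  refine Matrix.PosDef.of_dotProduct_mulVec_pos ?_ ?_
  · show (E * P * Eᵀ)ᴴ = E * P * Eᵀ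
    rw [real_conjTranspose, Matrix.transpose_mul, Matrix.transpose_mul,
      Matrix.transpose_transpose, hPt, Matrix.mul_assoc]
  · intro x hx
    rw [star_real_vec]
    have key : x ⬝ᵥ (E * P * Eᵀ) *ᵥ x = (Eᵀ *ᵥ x) ⬝ᵥ P *ᵥ (Eᵀ *ᵥ x) := by
      rw [← Matrix.mulVec_mulVec, ← Matrix.mulVec_mulVec, Matrix.dotProduct_mulVec x E,
        ← Matrix.mulVec_transpose]
    rw [key]
    have hxE : Eᵀ *ᵥ x ≠ 0 := by
      intro h0
      have hET : IsUnit Eᵀ := by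
        rw [Matrix.isUnit_iff_isUnit_det, Matrix.det_transpose]
        exact hE
      have hinj : Function.Injective (Eᵀ).mulVec := Matrix.mulVec_injective_iff_isUnit.2 hET
      exact hx (hinj (by rw [h0, Matrix.mulVec_zero]))
    have := hP.dotProduct_mulVec_pos hxE
    rwa [star_real_vec] at this

section Transfer

variable {n m : ℕ} (A : Matrix (Fin n) (Fin n) ℝ) (B : Matrix (Fin n) (Fin m) ℝ)
    (F : Matrix (Fin m) (Fin n) ℝ)

lemma specC_of_specM {μ : ℂ} (hμ : μ ≠ 0)
    (h : μ ∈ spectrum ℂ ((Matrix.fromBlocks A B (F * A) (F * B)).map Complex.ofReal)) :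
    μ ∈ spectrum ℂ ((A + B * F).map Complex.ofReal) := by
  rw [eig_iff] at h ⊢
  obtain ⟨u, hu, heig⟩ := h
  set Ac := A.map Complex.ofReal with hAc
  set Bc := B.map Complex.ofReal with hBc
  set Fc := F.map Complex.ofReal with hFc
  have hblocks : (Matrix.fromBlocks A B (F * A) (F * B)).map Complex.ofReal
      = Matrix.fromBlocks Ac Bc (Fc * Ac) (Fc * Bc) := by
    rw [Matrix.fromBlocks_map, map_mul', map_mul']
  rw [hblocks, Matrix.fromBlocks_mulVec] at heig
  set u1 : Fin n → ℂ := u ∘ Sum.inl with hu1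
  set u2 : Fin m → ℂ := u ∘ Sum.inr with hu2
  have htop : Ac *ᵥ u1 + Bc *ᵥ u2 = μ • u1 := by
    funext i; exact congrFun heig (Sum.inl i)
  have hbot : (Fc * Ac) *ᵥ u1 + (Fc * Bc) *ᵥ u2 = μ • u2 := by
    funext j; exact congrFun heig (Sum.inr j)
  have hbot' : Fc *ᵥ (Ac *ᵥ u1 + Bc *ᵥ u2) = μ • u2 := by
    rw [Matrix.mulVec_add, Matrix.mulVec_mulVec, Matrix.mulVec_mulVec]
    exact hbot
  rw [htop, Matrix.mulVec_smul] at hbot'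
  have hu2eq : u2 = Fc *ᵥ u1 :=
    smul_right_injective (Fin m → ℂ) hμ hbot'.symm
  have hu1ne : u1 ≠ 0 := by
    intro h0
    apply hu
    funext x
    cases x with
    | inl i => exact congrFun h0 i
    | inr j => rw [hu2eq, h0, Matrix.mulVec_zero] at hu2; exact congrFun hu2.symm j
  refine ⟨u1, hu1ne, ?_⟩
  rw [map_add', map_mul', ← hAc, ← hBc, ← hFc, Matrix.add_mulVec, ← Matrix.mulVec_mulVec,
    ← hu2eq, htop]

lemma specMT_of_specC {μ : ℂ} (hμ : μ ≠ 0)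
    (h : μ ∈ spectrum ℂ ((A + B * F).map Complex.ofReal)) :
    μ ∈ spectrum ℂ (((Matrix.fromBlocks A B (F * A) (F * B))ᵀ).map Complex.ofReal) := by
  set Ac := A.map Complex.ofReal with hAc
  set Bc := B.map Complex.ofReal with hBc
  set Fc := F.map Complex.ofReal with hFc
  have hC : (A + B * F).map Complex.ofReal = Ac + Bc * Fc := by rw [map_add', map_mul']
  rw [hC, ← spectrum_transpose, eig_iff] at h
  obtain ⟨x, hx, heig⟩ := h
  rw [Matrix.transpose_add, Matrix.transpose_mul] at heig
  have hblocks : ((Matrix.fromBlocks A B (F * A) (F * B))ᵀ).map Complex.ofReal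
      = Matrix.fromBlocks Acᵀ (Acᵀ * Fcᵀ) Bcᵀ (Bcᵀ * Fcᵀ) := by
    rw [Matrix.transpose_map, Matrix.fromBlocks_map, map_mul', map_mul', ← hAc, ← hBc, ← hFc,
      Matrix.fromBlocks_transpose, Matrix.transpose_mul, Matrix.transpose_mul]
  rw [eig_iff, hblocks]
  set y1 : Fin n → ℂ := Acᵀ *ᵥ x with hy1
  set y2 : Fin m → ℂ := Bcᵀ *ᵥ x with hy2
  have hkey : y1 + Fcᵀ *ᵥ y2 = μ • x := by
    rw [hy1, hy2, Matrix.mulVec_mulVec, ← Matrix.add_mulVec, heig]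
  refine ⟨Sum.elim y1 y2, ?_, ?_⟩
  · intro h0
    have h1 : y1 = 0 := by funext i; exact congrFun h0 (Sum.inl i)
    have h2 : y2 = 0 := by funext j; exact congrFun h0 (Sum.inr j)
    rw [h1, h2, Matrix.mulVec_zero, add_zero] at hkey
    exact hx (smul_right_injective (Fin n → ℂ) hμ
      (show μ • x = μ • 0 by rw [smul_zero, ← hkey]))
  · rw [Matrix.fromBlocks_mulVec]
    have e1 : Sum.elim y1 y2 ∘ Sum.inl = y1 := rfl
    have e2 : Sum.elim y1 y2 ∘ Sum.inr = y2 := rfl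
    rw [e1, e2]
    have t1 : Acᵀ *ᵥ y1 + (Acᵀ * Fcᵀ) *ᵥ y2 = μ • y1 := by
      rw [← Matrix.mulVec_mulVec, ← Matrix.mulVec_add, hkey, Matrix.mulVec_smul]
    have t2 : Bcᵀ *ᵥ y1 + (Bcᵀ * Fcᵀ) *ᵥ y2 = μ • y2 := by
      rw [← Matrix.mulVec_mulVec, ← Matrix.mulVec_add, hkey, Matrix.mulVec_smul]
    rw [t1, t2]
    funext z; cases z <;> rfl

end Transfer

end AuxGeneral

/-- The spectral radius of a real square matrix: the supremum of the moduli of the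
elements of the spectrum of the matrix regarded as a complex matrix. -/
noncomputable def specRad {N : Type*} [Fintype N] [DecidableEq N] (M : Matrix N N ℝ) : ℝ :=
  sSup ((fun z => ‖z‖) '' spectrum ℂ (M.map Complex.ofReal))

lemma specRad_lt_one_iff {N : Type*} [Fintype N] [DecidableEq N] (M : Matrix N N ℝ) :
    specRad M < 1 ↔ ∀ μ ∈ spectrum ℂ (M.map Complex.ofReal), ‖μ‖ < 1 := by
  unfold specRad
  set s := (fun z => ‖z‖) '' spectrum ℂ (M.map Complex.ofReal) with hs
  have hfin : s.Finite := (Matrix.finite_spectrum _).image _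
  constructor
  · intro h μ hμ
    have : ‖μ‖ ≤ sSup s :=
      le_csSup hfin.bddAbove (Set.mem_image_of_mem _ hμ)
    linarith
  · intro h
    rcases s.eq_empty_or_nonempty with he | hne
    · rw [he, Real.sSup_empty]; norm_num
    · rw [hfin.csSup_lt_iff hne]
      rintro x ⟨μ, hμ, rfl⟩
      exact h μ hμ

/-- Data-driven stability evaluation: with valid data `S ≻ 0`, `H = S·A_Fᵀ`, the closed loop
`A + B·F` is Schur stable iff there is a symmetric `P ≻ 0` with `Hᵀ·P·H ≺ S·P·S`. -/
theorem stability_evaluation {n m : ℕ}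
    (A : Matrix (Fin n) (Fin n) ℝ) (B : Matrix (Fin n) (Fin m) ℝ)
    (F : Matrix (Fin m) (Fin n) ℝ)
    (S H : Matrix (Fin n ⊕ Fin m) (Fin n ⊕ Fin m) ℝ)
    (hS : S.PosDef)
    (hH : S * (Matrix.fromBlocks A B (F * A) (F * B))ᵀ = H) :
    specRad (A + B * F) < 1 ↔
      ∃ P : Matrix (Fin n ⊕ Fin m) (Fin n ⊕ Fin m) ℝ,
        P.PosDef ∧ (S * P * S - Hᵀ * P * H).PosDef := by
  set Mr := Matrix.fromBlocks A B (F * A) (F * B) with hMr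
  have hSu : IsUnit S.det := isUnit_iff_ne_zero.mpr hS.det_pos.ne'
  have hSsym : Sᵀ = S := by
    have h2 : Sᴴ = S := hS.1
    rwa [real_conjTranspose] at h2
  have hHt : Hᵀ = Mr * S := by
    rw [← hH, Matrix.transpose_mul, Matrix.transpose_transpose, hSsym]
  have hHPH : ∀ P, Hᵀ * P * H = Mr * (S * P * S) * Mrᵀ := by
    intro P
    rw [hHt, ← hH]
    noncomm_ring
  rw [specRad_lt_one_iff]
  constructor
  · intro hC
    have hM : ∀ μ ∈ spectrum ℂ (Mr.map Complex.ofReal), ‖μ‖ < 1 := by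
      intro μ hμ
      by_cases hμ0 : μ = 0
      · rw [hμ0]; simp
      · exact hC μ (specC_of_specM A B F hμ0 hμ)
    have hMT : ∀ μ ∈ spectrum ℂ (Mrᵀ.map Complex.ofReal), ‖μ‖ < 1 := by
      intro μ hμ
      rw [Matrix.transpose_map, spectrum_transpose] at hμ
      exact hM μ hμ
    obtain ⟨Q, hQ, hlyap⟩ := exists_lyapunov hM hMT
    have hSinv : IsUnit (S⁻¹).det := isUnit_iff_ne_zero.mpr hS.inv.det_pos.ne'
    refine ⟨S⁻¹ * Q * S⁻¹, ?_, ?_⟩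
    · have h1 := posDef_conj hQ hSinv
      have h2 : (S⁻¹)ᵀ = S⁻¹ := by rw [Matrix.transpose_nonsing_inv, hSsym]
      rwa [h2] at h1
    · have hSPS : S * (S⁻¹ * Q * S⁻¹) * S = Q := by
        calc S * (S⁻¹ * Q * S⁻¹) * S = S * S⁻¹ * Q * (S⁻¹ * S) := by noncomm_ring
          _ = Q := by
              rw [Matrix.mul_nonsing_inv _ hSu, Matrix.nonsing_inv_mul _ hSu, one_mul, mul_one]
      rw [hHPH, hSPS, hlyap]
      exact Matrix.PosDef.one
  · rintro ⟨P, hP, hcond⟩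
    intro μ hμ
    by_cases hμ0 : μ = 0
    · rw [hμ0]; simp
    · have hspec := specMT_of_specC A B F hμ0 hμ
      rw [← hMr] at hspec
      rw [eig_iff] at hspec
      obtain ⟨v, hv, heig⟩ := hspec
      have hQpos : (S * P * S).PosDef := by
        have h1 := posDef_conj hP hSu
        rwa [hSsym] at h1
      have hLpos : (S * P * S - Mr * (S * P * S) * Mrᵀ).PosDef := by
        rw [← hHPH]
        exact hcond
      exact lyapunov_eig_bound hQpos hLpos hv heig
end

section
/- Let A ∈ ℝ^{n×n}, B ∈ ℝ^{n×m}, F ∈ ℝ^{m×n} with ρ(A + B·F) < 1, let A_F := [[A, B], [F·A, F·B]], let Λ ∈ ℝ^{(n+m)×(n+m)} be symmetric positive semidefinite, let S ∈ ℝ^{(n+m)×(n+m)} be symmetric positive definite, and set H := S·A_Fᵀ. Then the series P̂ := Σ_{k=0}^{∞} A_F^k·(A_Fᵀ)^k converges, the feasible set D := {P ∈ ℝ^{(n+m)×(n+m)} : P symmetric and Hᵀ·P·H + I ⪯ S·P·S} is nonempty, the infimum of trace(Λ·S·P·S) over P ∈ D equals trace(Λ·P̂), and this infimum is attained by some P ∈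 D. -/
open Matrix

section Helpers

open Filter

variable {N : Type*} [Fintype N] [DecidableEq N]

lemma PE.mem_spectrum_iff_eigen (M : Matrix N N ℂ) (z : ℂ) :
    z ∈ spectrum ℂ M ↔ ∃ v, v ≠ 0 ∧ M *ᵥ v = z • v := by
  rw [spectrum.mem_iff, Matrix.isUnit_iff_isUnit_det, isUnit_iff_ne_zero, not_ne_iff,
    ← Matrix.exists_mulVec_eq_zero_iff]
  constructor
  · rintro ⟨v, hv, h⟩
    refine ⟨v, hv, ?_⟩
    rw [Algebra.algebraMap_eq_smul_one, sub_mulVec, smul_mulVec, one_mulVec,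
      sub_eq_zero] at h
    exact h.symm
  · rintro ⟨v, hv, h⟩
    refine ⟨v, hv, ?_⟩
    rw [Algebra.algebraMap_eq_smul_one, sub_mulVec, smul_mulVec, one_mulVec, h, sub_self]

lemma PE.spec_fromBlocks {n m : ℕ} (A : Matrix (Fin n) (Fin n) ℂ) (B : Matrix (Fin n) (Fin m) ℂ)
    (F : Matrix (Fin m) (Fin n) ℂ) {z : ℂ} (hz : z ≠ 0)
    (h : z ∈ spectrum ℂ (fromBlocks A B (F * A) (F * B))) :
    z ∈ spectrum ℂ (A + B * F) := by
  rw [PE.mem_spectrum_iff_eigen] at h ⊢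
  obtain ⟨v, hv, hMv⟩ := h
  set x : Fin n → ℂ := v ∘ Sum.inl with hx
  set y : Fin m → ℂ := v ∘ Sum.inr with hy
  have hv' : v = Sum.elim x y := by funext i; cases i <;> rfl
  rw [hv', Matrix.fromBlocks_mulVec] at hMv
  have h1 : A *ᵥ x + B *ᵥ y = z • x := by
    funext i; exact congrFun hMv (Sum.inl i)
  have h2 : (F * A) *ᵥ x + (F * B) *ᵥ y = z • y := by
    funext j; exact congrFun hMv (Sum.inr j)
  have hyx : y = F *ᵥ x := by
    have : z • (F *ᵥ x) = z • y := by
      rw [← h2, ← Matrix.mulVec_mulVec, ← Matrix.mulVec_mulVec, ← Matrix.mulVec_add, h1,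
        Matrix.mulVec_smul]
    exact (smul_right_injective (Fin m → ℂ) hz this).symm
  have hx0 : x ≠ 0 := by
    intro h0
    apply hv
    rw [hv', h0, hyx, h0, Matrix.mulVec_zero]
    simp
  refine ⟨x, hx0, ?_⟩
  rw [Matrix.add_mulVec, ← Matrix.mulVec_mulVec, ← hyx, h1]

section Norms

attribute [local instance] Matrix.frobeniusNormedAddCommGroup Matrix.frobeniusNormedRing
  Matrix.frobeniusNormedAlgebra

lemma PE.entry_le_frobenius (X : Matrix N N ℂ) (i j : N) : ‖X i j‖ ≤ ‖X‖ := by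
  rw [← coe_nnnorm, ← coe_nnnorm, NNReal.coe_le_coe]
  rw [Matrix.frobenius_nnnorm_def]
  have h1 : ‖X i j‖₊ = (‖X i j‖₊ ^ (2:ℝ)) ^ (1/2:ℝ) := by
    rw [← NNReal.rpow_mul]
    norm_num
  rw [h1]
  apply NNReal.rpow_le_rpow _ (by norm_num)
  calc ‖X i j‖₊ ^ (2:ℝ) ≤ ∑ j', ‖X i j'‖₊ ^ (2:ℝ) :=
        Finset.single_le_sum (f := fun j' => ‖X i j'‖₊ ^ (2:ℝ))
          (fun _ _ => zero_le) (Finset.mem_univ j)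
    _ ≤ ∑ i', ∑ j', ‖X i' j'‖₊ ^ (2:ℝ) :=
        Finset.single_le_sum (f := fun i' => ∑ j', ‖X i' j'‖₊ ^ (2:ℝ))
          (fun _ _ => zero_le) (Finset.mem_univ i)

lemma PE.specAbs_bddAbove (C : Matrix N N ℂ) :
    BddAbove ((fun z => ‖z‖) '' spectrum ℂ C) :=
  ((spectrum.isCompact C).image continuous_norm).bddAbove

lemma PE.entry_decay (C : Matrix N N ℂ) (h : ∀ z ∈ spectrum ℂ C, ‖z‖ < 1) :
    ∃ r : ℝ, 0 ≤ r ∧ r < 1 ∧ ∃ K : ℕ, ∀ k ≥ K, ∀ i j, ‖(C ^ k) i j‖ ≤ r ^ k := by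
  have hρ : spectralRadius ℂ C < 1 := by
    rcases Set.eq_empty_or_nonempty (spectrum ℂ C) with he | hne
    · simp [spectralRadius, he]
    · refine spectrum.spectralRadius_lt_of_forall_lt_of_nonempty hne fun z hz => ?_
      have := h z hz
      simpa [← NNReal.coe_lt_coe, coe_nnnorm] using this
  obtain ⟨c, hc1, hc2⟩ := exists_between hρ
  have hct : c ≠ ⊤ := by
    intro hct
    rw [hct] at hc2
    exact (lt_irrefl _ (hc2.trans (lt_top_iff_ne_top.mpr ENNReal.one_ne_top))).elim
  set r : ℝ := c.toReal with hr
  have hr0 : 0 ≤ r := ENNReal.toReal_nonneg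
  have hr1 : r < 1 := by
    rw [hr, ← ENNReal.toReal_one]
    exact ENNReal.toReal_strict_mono ENNReal.one_ne_top hc2
  have hG := spectrum.pow_nnnorm_pow_one_div_tendsto_nhds_spectralRadius C
  have hev : ∀ᶠ k : ℕ in atTop, ((‖C ^ k‖₊ : ENNReal) ^ (1/(k:ℝ))) < c :=
    hG.eventually_lt_const hc1
  obtain ⟨K, hK⟩ := hev.exists_forall_of_atTop
  refine ⟨r, hr0, hr1, max K 1, fun k hk i j => ?_⟩
  have hk1 : 1 ≤ k := le_trans (le_max_right K 1) hk
  have hkK : K ≤ k := le_trans (le_max_left K 1) hk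
  have hklt := hK k hkK
  have hkne : (k:ℝ) ≠ 0 := Nat.cast_ne_zero.mpr (by omega)
  have hpow : ((‖C ^ k‖₊ : ENNReal)) ≤ c ^ (k:ℝ) := by
    have := ENNReal.rpow_le_rpow hklt.le (Nat.cast_nonneg k : (0:ℝ) ≤ k)
    rwa [← ENNReal.rpow_mul, one_div, inv_mul_cancel₀ hkne, ENNReal.rpow_one] at this
  have hnorm : ‖C ^ k‖ ≤ r ^ k := by
    have h1 : (‖C ^ k‖₊ : ENNReal).toReal ≤ (c ^ (k:ℝ)).toReal :=
      ENNReal.toReal_mono (by simp [ENNReal.rpow_natCast, ENNReal.pow_ne_top hct]) hpow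
    rw [ENNReal.coe_toReal, coe_nnnorm] at h1
    rwa [← ENNReal.toReal_rpow, Real.rpow_natCast] at h1
  exact le_trans (PE.entry_le_frobenius _ i j) hnorm

end Norms

omit [Fintype N] [DecidableEq N] in
lemma PE.matrix_hasSum_iff {ι : Type*} {f : ι → Matrix N N ℝ} {a : Matrix N N ℝ} :
    HasSum f a ↔ ∀ i j, HasSum (fun x => f x i j) (a i j) := by
  constructor
  · intro h i j
    exact Pi.hasSum.mp (Pi.hasSum.mp h i) j
  · intro h
    exact Pi.hasSum.mpr fun i => Pi.hasSum.mpr fun j => h i j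

omit [Fintype N] [DecidableEq N] in
lemma PE.isHermitian_of_isSymm {Z : Matrix N N ℝ} (h : Z.IsSymm) : Z.IsHermitian := by
  rwa [Matrix.IsHermitian, Matrix.conjTranspose_eq_transpose_of_trivial]

lemma PE.psd_trace_nonneg {Z : Matrix N N ℝ} (hZ : Z.PosSemidef) : 0 ≤ Z.trace := by
  rw [Matrix.trace]
  apply Finset.sum_nonneg
  intro i _
  exact hZ.diag_nonneg

open scoped MatrixOrder in
lemma PE.psd_trace_mul_nonneg {X Y : Matrix N N ℝ} (hX : X.PosSemidef) (hY : Y.PosSemidef) :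
    0 ≤ (X * Y).trace := by
  obtain ⟨s, hs, hss⟩ : ∃ s : Matrix N N ℝ, s.PosSemidef ∧ s * s = X :=
    ⟨CFC.sqrt X, (CFC.sqrt_nonneg X).posSemidef, CFC.sqrt_mul_sqrt_self X hX.nonneg⟩
  have h1 : (X * Y).trace = (s * Y * s).trace := by
    rw [← hss, mul_assoc, Matrix.trace_mul_comm, mul_assoc]
  rw [h1]
  have h2 : (s * Y * s).PosSemidef := by
    have := hY.mul_mul_conjTranspose_same s
    rwa [hs.1.eq] at this
  exact PE.psd_trace_nonneg h2

end Helpers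

/-- Performance evaluation: for a stabilizing `F`, the series `P̂ = Σ_k A_F^k (A_Fᵀ)^k`
converges, the feasible set of the data-driven LMI is nonempty, and the minimum of
`trace(Λ·S·P·S)` over the feasible set equals `trace(Λ·P̂)` and is attained. -/
theorem performance_evaluation {n m : ℕ}
    (A : Matrix (Fin n) (Fin n) ℝ) (B : Matrix (Fin n) (Fin m) ℝ)
    (F : Matrix (Fin m) (Fin n) ℝ)
    (hF : specRad (A + B * F) < 1)
    (Λ : Matrix (Fin n ⊕ Fin m) (Fin n ⊕ Fin m) ℝ) (hΛ : Λ.PosSemidef)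
    (S : Matrix (Fin n ⊕ Fin m) (Fin n ⊕ Fin m) ℝ) (hS : S.PosDef)
    (H : Matrix (Fin n ⊕ Fin m) (Fin n ⊕ Fin m) ℝ)
    (hH : H = S * (Matrix.fromBlocks A B (F * A) (F * B))ᵀ) :
    Summable (fun k : ℕ =>
        (Matrix.fromBlocks A B (F * A) (F * B)) ^ k *
          ((Matrix.fromBlocks A B (F * A) (F * B))ᵀ) ^ k) ∧
      {P : Matrix (Fin n ⊕ Fin m) (Fin n ⊕ Fin m) ℝ |
          P.IsSymm ∧ (S * P * S - (Hᵀ * P * H + 1)).PosSemidef}.Nonempty ∧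
      IsLeast {t : ℝ | ∃ P : Matrix (Fin n ⊕ Fin m) (Fin n ⊕ Fin m) ℝ,
          (P.IsSymm ∧ (S * P * S - (Hᵀ * P * H + 1)).PosSemidef) ∧
            t = Matrix.trace (Λ * (S * P * S))}
        (Matrix.trace (Λ * ∑' k : ℕ,
          (Matrix.fromBlocks A B (F * A) (F * B)) ^ k *
            ((Matrix.fromBlocks A B (F * A) (F * B))ᵀ) ^ k)) := by
  set M : Matrix (Fin n ⊕ Fin m) (Fin n ⊕ Fin m) ℝ := Matrix.fromBlocks A B (F * A) (F * B)
    with hM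
  -- Step 1: all complex eigenvalues of `M` have modulus `< 1`
  have hCspec : ∀ z ∈ spectrum ℂ (M.map Complex.ofReal), ‖z‖ < 1 := by
    intro z hz
    rcases eq_or_ne z 0 with rfl | hz0
    · simp
    · have hCeq : M.map Complex.ofReal =
          Matrix.fromBlocks (A.map Complex.ofReal) (B.map Complex.ofReal)
            ((F.map Complex.ofReal) * (A.map Complex.ofReal))
            ((F.map Complex.ofReal) * (B.map Complex.ofReal)) := by
        rw [hM]
        ext (i | i) (j | j) <;>
          simp [Matrix.map_apply, Matrix.mul_apply]
      rw [hCeq] at hz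
      have hz' := PE.spec_fromBlocks _ _ _ hz0 hz
      have heq2 : (A.map Complex.ofReal) + (B.map Complex.ofReal) * (F.map Complex.ofReal)
          = (A + B * F).map Complex.ofReal := by
        ext i j; simp [Matrix.map_apply, Matrix.mul_apply]
      rw [heq2] at hz'
      have hle : ‖z‖ ≤ specRad (A + B * F) :=
        le_csSup (PE.specAbs_bddAbove _) ⟨z, hz', rfl⟩
      calc ‖z‖ = ‖z‖ := rfl
        _ ≤ specRad (A + B * F) := hle
        _ < 1 := hF
  -- Step 2: geometric decay of the entries of `M ^ k`
  have hdec : ∃ r : ℝ, 0 ≤ r ∧ r < 1 ∧ ∃ K : ℕ, ∀ k ≥ K, ∀ i j, |(M ^ k) i j| ≤ r ^ k := by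
    obtain ⟨r, h0, h1, K, hK⟩ := PE.entry_decay _ hCspec
    refine ⟨r, h0, h1, K, fun k hk i j => ?_⟩
    have hb := hK k hk i j
    have hmap : (M.map Complex.ofReal) ^ k = (M ^ k).map Complex.ofReal := by
      have := map_pow (Complex.ofRealHom.mapMatrix) M k
      exact this.symm
    rw [hmap] at hb
    simpa [Matrix.map_apply, Complex.norm_real, Real.norm_eq_abs] using hb
  obtain ⟨r, hr0, hr1, K, hK⟩ := hdec
  -- Step 3: summability of the series
  have hTsummable : Summable (fun k : ℕ => M ^ k * (Mᵀ) ^ k) := by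
    have hsum : ∀ i j, Summable (fun k : ℕ => (M ^ k * (Mᵀ) ^ k) i j) := by
      intro i j
      have hg : Summable (fun k : ℕ =>
          (Fintype.card (Fin n ⊕ Fin m) : ℝ) * (r * r) ^ k) :=
        (summable_geometric_of_lt_one (by positivity) (by nlinarith)).mul_left _
      refine hg.of_norm_bounded_eventually_nat ?_
      filter_upwards [Filter.eventually_ge_atTop K] with k hk
      have hb : ∀ l, |(M ^ k) i l * ((Mᵀ) ^ k) l j| ≤ r ^ k * r ^ k := by
        intro l
        have h1 : ((Mᵀ) ^ k) l j = (M ^ k) j l := by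
          rw [← Matrix.transpose_pow, Matrix.transpose_apply]
        rw [h1, abs_mul]
        exact mul_le_mul (hK k hk i l) (hK k hk j l) (abs_nonneg _)
          (pow_nonneg hr0 k)
      calc ‖(M ^ k * (Mᵀ) ^ k) i j‖
          = |∑ l, (M ^ k) i l * ((Mᵀ) ^ k) l j| := by rw [Matrix.mul_apply]; rfl
        _ ≤ ∑ l, |(M ^ k) i l * ((Mᵀ) ^ k) l j| := Finset.abs_sum_le_sum_abs _ _
        _ ≤ ∑ _l : Fin n ⊕ Fin m, r ^ k * r ^ k :=
            Finset.sum_le_sum fun l _ => hb l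
        _ = (Fintype.card (Fin n ⊕ Fin m) : ℝ) * (r * r) ^ k := by
            rw [Finset.sum_const, Finset.card_univ, nsmul_eq_mul, mul_pow]
    refine ⟨Matrix.of (fun i j => ∑' k, (M ^ k * (Mᵀ) ^ k) i j),
      PE.matrix_hasSum_iff.mpr fun i j => ?_⟩
    exact (hsum i j).hasSum
  -- Step 4: `M ^ k → 0`
  have hM0 : Filter.Tendsto (fun k : ℕ => M ^ k) Filter.atTop (nhds 0) := by
    refine tendsto_pi_nhds.mpr fun i => tendsto_pi_nhds.mpr fun j => ?_
    have : Filter.Tendsto (fun k : ℕ => r ^ k) Filter.atTop (nhds 0) :=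
      tendsto_pow_atTop_nhds_zero_of_lt_one hr0 hr1
    refine squeeze_zero_norm' ?_ this
    filter_upwards [Filter.eventually_ge_atTop K] with k hk
    simpa [Real.norm_eq_abs] using hK k hk i j
  -- Step 5: properties of the limit matrix
  set Phat := ∑' k : ℕ, M ^ k * (Mᵀ) ^ k with hPhatdef
  have hHasSum : HasSum (fun k : ℕ => M ^ k * (Mᵀ) ^ k) Phat := hTsummable.hasSum
  have hTpsd : ∀ k : ℕ, (M ^ k * (Mᵀ) ^ k).PosSemidef := by
    intro k
    have h := Matrix.posSemidef_self_mul_conjTranspose (M ^ k)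
    rwa [Matrix.conjTranspose_eq_transpose_of_trivial, Matrix.transpose_pow] at h
  have hPhatsymm : Phat.IsSymm := by
    rw [Matrix.IsSymm, hPhatdef, Matrix.transpose_tsum]
    congr 1
    funext k
    simp [Matrix.transpose_mul, Matrix.transpose_pow, Matrix.transpose_transpose]
  have hPhatpsd : Phat.PosSemidef := by
    refine Matrix.PosSemidef.of_dotProduct_mulVec_nonneg (PE.isHermitian_of_isSymm hPhatsymm) fun x => ?_
    set q : Matrix (Fin n ⊕ Fin m) (Fin n ⊕ Fin m) ℝ →+ ℝ :=
      AddMonoidHom.mk' (fun X => star x ⬝ᵥ (X *ᵥ x))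
        (fun X Y => by simp [Matrix.add_mulVec, dotProduct_add]) with hqdef
    have hqc : Continuous q :=
      Continuous.dotProduct continuous_const
        (continuous_id.matrix_mulVec continuous_const)
    have h2 := hHasSum.map q hqc
    have h3 : (0:ℝ) ≤ q Phat := by
      rw [← h2.tsum_eq]
      exact tsum_nonneg fun k => (hTpsd k).dotProduct_mulVec_nonneg x
    simpa [hqdef] using h3
  have hrec : Phat = 1 + M * Phat * Mᵀ := by
    have h0 : Phat = (M ^ 0 * (Mᵀ) ^ 0) + ∑' k : ℕ, M ^ (k+1) * (Mᵀ) ^ (k+1) := by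
      rw [hPhatdef]
      exact Summable.tsum_eq_zero_add hTsummable
    have hsucc : (fun k : ℕ => M ^ (k+1) * (Mᵀ) ^ (k+1))
        = fun k : ℕ => M * (M ^ k * (Mᵀ) ^ k) * Mᵀ := by
      funext k
      rw [pow_succ' M k, pow_succ (Mᵀ) k]
      simp only [Matrix.mul_assoc]
    have hφc : Continuous (fun X : Matrix (Fin n ⊕ Fin m) (Fin n ⊕ Fin m) ℝ =>
        M * X * Mᵀ) :=
      (continuous_const.matrix_mul continuous_id).matrix_mul continuous_const
    set φ : Matrix (Fin n ⊕ Fin m) (Fin n ⊕ Fin m) ℝ →+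
        Matrix (Fin n ⊕ Fin m) (Fin n ⊕ Fin m) ℝ :=
      AddMonoidHom.mk' (fun X => M * X * Mᵀ)
        (fun X Y => by simp [mul_add, add_mul]) with hφdef
    have h2 := hHasSum.map φ hφc
    have h3 : ∑' k : ℕ, M * (M ^ k * (Mᵀ) ^ k) * Mᵀ = M * Phat * Mᵀ := h2.tsum_eq
    conv_lhs => rw [h0, hsucc]
    rw [h3]
    simp
  -- Step 6: the feasible point
  have hdetS : IsUnit S.det := isUnit_iff_ne_zero.mpr (ne_of_gt hS.det_pos)
  have hSS : S * S⁻¹ = 1 := Matrix.mul_nonsing_inv S hdetS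
  have hSS' : S⁻¹ * S = 1 := Matrix.nonsing_inv_mul S hdetS
  have hSsymm : Sᵀ = S := by
    have h := hS.1.eq
    rwa [Matrix.conjTranspose_eq_transpose_of_trivial] at h
  set P0 := S⁻¹ * Phat * S⁻¹ with hP0
  have hSP0S : S * P0 * S = Phat := by
    rw [hP0]
    calc S * (S⁻¹ * Phat * S⁻¹) * S = (S * S⁻¹) * Phat * (S⁻¹ * S) := by
          simp only [Matrix.mul_assoc]
      _ = Phat := by rw [hSS, hSS', one_mul, mul_one]
  have hHt : Hᵀ = M * S := by
    rw [hH, Matrix.transpose_mul, Matrix.transpose_transpose, hSsymm]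
  have hHP : ∀ P : Matrix (Fin n ⊕ Fin m) (Fin n ⊕ Fin m) ℝ,
      Hᵀ * P * H = M * (S * P * S) * Mᵀ := by
    intro P
    rw [hHt, hH]
    simp only [Matrix.mul_assoc]
  have hP0symm : P0.IsSymm := by
    rw [Matrix.IsSymm, hP0, Matrix.transpose_mul, Matrix.transpose_mul,
      Matrix.transpose_nonsing_inv, hSsymm, hPhatsymm.eq]
    simp only [Matrix.mul_assoc]
  have hP0psd : (S * P0 * S - (Hᵀ * P0 * H + 1)).PosSemidef := by
    rw [hHP P0, hSP0S]
    have hz : Phat - (M * Phat * Mᵀ + 1) = 0 := by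
      nth_rewrite 1 [hrec]
      abel
    rw [hz]
    exact Matrix.PosSemidef.zero
  refine ⟨hTsummable, ⟨P0, hP0symm, hP0psd⟩, ⟨P0, ⟨hP0symm, hP0psd⟩, by rw [hSP0S]⟩, ?_⟩
  -- Step 7: lower bound
  rintro t ⟨P, ⟨hPsym, hPfeas⟩, rfl⟩
  have hQsymm : (S * P * S)ᵀ = S * P * S := by
    rw [Matrix.transpose_mul, Matrix.transpose_mul, hSsymm, hPsym.eq]
    simp only [Matrix.mul_assoc]
  have hE : ((S * P * S) - (M * (S * P * S) * Mᵀ + 1)).PosSemidef := by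
    rw [← hHP P]
    exact hPfeas
  have hG : ∀ k : ℕ, ((S * P * S) -
      ((∑ i ∈ Finset.range k, M ^ i * (Mᵀ) ^ i) +
        M ^ k * (S * P * S) * (Mᵀ) ^ k)).PosSemidef := by
    intro k
    induction k with
    | zero =>
        simp only [pow_zero, Finset.range_zero, Finset.sum_empty, zero_add, one_mul,
          mul_one, sub_self]
        exact Matrix.PosSemidef.zero
    | succ k ih =>
        have hstep : (S * P * S) -
            ((∑ i ∈ Finset.range (k+1), M ^ i * (Mᵀ) ^ i) +
              M ^ (k+1) * (S * P * S) * (Mᵀ) ^ (k+1))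
            = ((S * P * S) -
                ((∑ i ∈ Finset.range k, M ^ i * (Mᵀ) ^ i) +
                  M ^ k * (S * P * S) * (Mᵀ) ^ k)) +
              M ^ k * ((S * P * S) - (M * (S * P * S) * Mᵀ + 1)) * (Mᵀ) ^ k := by
          rw [Finset.sum_range_succ, pow_succ M k, pow_succ' (Mᵀ) k]
          noncomm_ring
        rw [hstep]
        refine ih.add ?_
        have h2 := hE.mul_mul_conjTranspose_same (M ^ k)
        rwa [Matrix.conjTranspose_eq_transpose_of_trivial, Matrix.transpose_pow] at h2
  have hQtend : Filter.Tendsto (fun k : ℕ => (S * P * S) -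
      ((∑ i ∈ Finset.range k, M ^ i * (Mᵀ) ^ i) +
        M ^ k * (S * P * S) * (Mᵀ) ^ k)) Filter.atTop (nhds ((S * P * S) - Phat)) := by
    have h1 : Filter.Tendsto (fun k : ℕ => ∑ i ∈ Finset.range k, M ^ i * (Mᵀ) ^ i)
        Filter.atTop (nhds Phat) := hHasSum.tendsto_sum_nat
    have h2 : Filter.Tendsto (fun k : ℕ => M ^ k * (S * P * S) * (Mᵀ) ^ k)
        Filter.atTop (nhds 0) := by
      have hc : Continuous (fun X : Matrix (Fin n ⊕ Fin m) (Fin n ⊕ Fin m) ℝ =>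
          X * (S * P * S) * Xᵀ) :=
        (continuous_id.matrix_mul continuous_const).matrix_mul
          continuous_id.matrix_transpose
      have heq : (fun k : ℕ => M ^ k * (S * P * S) * (Mᵀ) ^ k)
          = (fun X : Matrix (Fin n ⊕ Fin m) (Fin n ⊕ Fin m) ℝ => X * (S * P * S) * Xᵀ)
            ∘ (fun k : ℕ => M ^ k) := by
        funext k
        simp [Function.comp, Matrix.transpose_pow]
      rw [heq]
      have h0' := (hc.tendsto 0).comp hM0
      simpa using h0'
    have h3 := Filter.Tendsto.sub
      (tendsto_const_nhds (x := S * P * S) (f := Filter.atTop (α := ℕ))) (h1.add h2)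
    simpa using h3
  have hQP : ((S * P * S) - Phat).PosSemidef := by
    refine Matrix.PosSemidef.of_dotProduct_mulVec_nonneg (PE.isHermitian_of_isSymm ?_) fun x => ?_
    · rw [Matrix.IsSymm, Matrix.transpose_sub, hQsymm, hPhatsymm.eq]
    · have hqc : Continuous (fun X : Matrix (Fin n ⊕ Fin m) (Fin n ⊕ Fin m) ℝ =>
          star x ⬝ᵥ (X *ᵥ x)) :=
        Continuous.dotProduct continuous_const
          (continuous_id.matrix_mulVec continuous_const)
      have hcomp := (hqc.tendsto _).comp hQtend
      refine ge_of_tendsto' hcomp fun k => ?_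
      exact (hG k).dotProduct_mulVec_nonneg x
  have htr : 0 ≤ (Λ * ((S * P * S) - Phat)).trace := PE.psd_trace_mul_nonneg hΛ hQP
  rw [Matrix.mul_sub, Matrix.trace_sub] at htr
  linarith
end

section
/- Let A ∈ ℝ^{n×n}, B ∈ ℝ^{n×m}, Q ∈ ℝ^{n×n} symmetric positive semidefinite, R ∈ ℝ^{m×m} symmetric positive definite, and Λ := [[Q, 0], [0, R]] ∈ ℝ^{(n+m)×(n+m)}. Assume (A, B) is stabilizable (there exists F ∈ ℝ^{m×n} with ρ(A + B·F) < 1) and Q = Cᵀ·C for some C ∈ ℝ^{p×n} with (A, C) detectable (there exists L ∈ ℝ^{n×p} with ρ(A + L·C) < 1). Let X* ∈ ℝ^{n×n} be symmetric positive semidefinite satisfying the algebraic Riccati equation X* = Aᵀ·X*·A − Aᵀ·X*·B·(R + Bᵀ·X*·B)⁻¹·Bᵀ·X*·A + Q, and define P* := [[Q + Aᵀ·X*·A, Aᵀ·X*·B], [Bᵀ·X*·A, R + Bᵀ·X*·B]]. Define the value iteration P₀ := 0 and P_{k+1} := Λ + Tᵀ·(P_{k,11} − P_{k,12}·P_{k,22}⁻¹·P_{k,12}ᵀ)·T,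 where T := [A B] ∈ ℝ^{n×(n+m)} and P_{k,11} ∈ ℝ^{n×n}, P_{k,12} ∈ ℝ^{n×m}, P_{k,22} ∈ ℝ^{m×m} are the blocks of P_k (matrix inverse taken with the convention that a non-invertible matrix has inverse 0, as occurs at k = 0). Then P_k converges entrywise to P* as k → ∞. -/
open Matrix Filter
open scoped NNReal ENNReal ComplexOrder

namespace ValueIterAux

/-! ### Complexification lemmas -/

lemma ctR {a b : Type*} (M : Matrix a b ℝ) : Mᴴ = Mᵀ := by
  ext i j; simp [Matrix.conjTranspose_apply]

lemma map_mulc {a b c : Type*} [Fintype b] (M : Matrix a b ℝ) (N : Matrix b c ℝ) :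
    (M * N).map Complex.ofReal = M.map Complex.ofReal * N.map Complex.ofReal := by
  ext i j
  simp [Matrix.mul_apply, Matrix.map_apply]

lemma map_transpose_c {a b : Type*} (M : Matrix a b ℝ) :
    (Mᵀ).map Complex.ofReal = (M.map Complex.ofReal)ᴴ := by
  ext i j
  simp [Matrix.map_apply, Matrix.conjTranspose_apply]

lemma map_add_c {a b : Type*} (M N : Matrix a b ℝ) :
    (M + N).map Complex.ofReal = M.map Complex.ofReal + N.map Complex.ofReal := by
  ext i j; simp [Matrix.map_apply]

lemma map_sub_c {a b : Type*} (M N : Matrix a b ℝ) :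
    (M - N).map Complex.ofReal = M.map Complex.ofReal - N.map Complex.ofReal := by
  ext i j; simp [Matrix.map_apply]

lemma map_pow_c {k : Type*} [Fintype k] [DecidableEq k] (M : Matrix k k ℝ) (j : ℕ) :
    (M ^ j).map Complex.ofReal = (M.map Complex.ofReal) ^ j := by
  induction j with
  | zero =>
    simp only [pow_zero]
    ext i l
    by_cases h : i = l <;> simp [Matrix.map_apply, Matrix.one_apply, h]
  | succ j ih =>
    rw [pow_succ, pow_succ, ← ih]
    ext i l
    simp [Matrix.mul_apply, Matrix.map_apply]

lemma psd_map {k : Type*} [Fintype k] {S : Matrix k k ℝ} (hS : S.PosSemidef) :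
    (S.map Complex.ofReal).PosSemidef := by
  obtain ⟨T, rfl⟩ : ∃ T : Matrix k k ℝ, S = Tᴴ * T := by
    classical
    open scoped MatrixOrder in
    exact CStarAlgebra.nonneg_iff_eq_star_mul_self.mp hS.nonneg
  have : ((Tᴴ * T).map Complex.ofReal) = (T.map Complex.ofReal)ᴴ * (T.map Complex.ofReal) := by
    ext i j
    simp [Matrix.mul_apply, Matrix.map_apply, Matrix.conjTranspose_apply]
  rw [this]
  exact Matrix.posSemidef_conjTranspose_mul_self _

lemma quad_zero {k : Type*} [Fintype k] {S : Matrix k k ℝ} (hS : S.PosSemidef)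
    {v : k → ℂ} (h : (star v ⬝ᵥ (S.map Complex.ofReal) *ᵥ v).re ≤ 0) :
    (S.map Complex.ofReal) *ᵥ v = 0 := by
  have hpsd := psd_map hS
  have h0 : (0 : ℂ) ≤ star v ⬝ᵥ (S.map Complex.ofReal) *ᵥ v := hpsd.dotProduct_mulVec_nonneg v
  have : star v ⬝ᵥ (S.map Complex.ofReal) *ᵥ v = 0 := by
    have h1 := (Complex.le_def.mp h0).1
    have h2 := (Complex.le_def.mp h0).2
    apply Complex.ext
    · simpa using le_antisymm h (by simpa using h1)
    · simpa using h2.symm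
  exact (hpsd.dotProduct_mulVec_zero_iff v).mp this

/-! ### Spectral lemmas -/

lemma mem_spectrum_iff_eigen {k : Type*} [Fintype k] [DecidableEq k]
    (M : Matrix k k ℂ) (lam : ℂ) :
    lam ∈ spectrum ℂ M ↔ ∃ v, v ≠ 0 ∧ M *ᵥ v = lam • v := by
  rw [spectrum.mem_iff]
  rw [Matrix.isUnit_iff_isUnit_det]
  rw [isUnit_iff_ne_zero, not_not]
  rw [← Matrix.exists_mulVec_eq_zero_iff]
  constructor
  · rintro ⟨v, hv, hveq⟩
    refine ⟨v, hv, ?_⟩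
    have : (algebraMap ℂ (Matrix k k ℂ)) lam = lam • (1 : Matrix k k ℂ) := by
      rw [Algebra.algebraMap_eq_smul_one]
    rw [this, Matrix.sub_mulVec, Matrix.smul_mulVec, Matrix.one_mulVec, sub_eq_zero] at hveq
    exact hveq.symm
  · rintro ⟨v, hv, hveq⟩
    refine ⟨v, hv, ?_⟩
    rw [Algebra.algebraMap_eq_smul_one, Matrix.sub_mulVec, Matrix.smul_mulVec,
      Matrix.one_mulVec, hveq, sub_self]

lemma abs_le_specRad {k : Type*} [Fintype k] [DecidableEq k] {M : Matrix k k ℝ} {lam : ℂ}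
    (h : lam ∈ spectrum ℂ (M.map Complex.ofReal)) : ‖lam‖ ≤ specRad M :=
  le_csSup (((M.map Complex.ofReal).finite_spectrum.image _).bddAbove) ⟨lam, h, rfl⟩

lemma pow_tendsto_zero {k : Type*} [Fintype k] [DecidableEq k] {M : Matrix k k ℝ}
    (h : specRad M < 1) :
    Tendsto (fun j : ℕ => M ^ j) atTop (nhds 0) := by
  rcases isEmpty_or_nonempty k with hk | hk
  · have hz : ∀ j : ℕ, M ^ j = (0 : Matrix k k ℝ) := fun j => by
      ext i l; exact (IsEmpty.false i).elim
    simp only [hz]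
    exact tendsto_const_nhds
  · set Mc := M.map Complex.ofReal with hMc
    have hsr : spectralRadius ℂ Mc < 1 := by
      have hble : spectralRadius ℂ Mc ≤ ((Real.toNNReal (max (specRad M) 0) : ℝ≥0) : ℝ≥0∞) := by
        rw [spectralRadius]
        refine iSup₂_le fun z hz => ?_
        rw [ENNReal.coe_le_coe, ← norm_toNNReal]
        apply Real.toNNReal_mono
        exact le_max_of_le_left (by simpa using abs_le_specRad hz)
      refine lt_of_le_of_lt hble ?_
      rw [ENNReal.coe_lt_one_iff]
      rw [← NNReal.coe_lt_one]
      rw [Real.coe_toNNReal']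
      simp [max_lt_iff, h]
    have hentry : ∀ i l, Tendsto (fun j : ℕ => (M ^ j) i l) atTop (nhds (0 : ℝ)) := by
      letI : SeminormedRing (Matrix k k ℂ) := Matrix.linftyOpSemiNormedRing
      letI : NormedRing (Matrix k k ℂ) := Matrix.linftyOpNormedRing
      letI : NormedAlgebra ℂ (Matrix k k ℂ) := Matrix.linftyOpNormedAlgebra
      have hgel := spectrum.pow_nnnorm_pow_one_div_tendsto_nhds_spectralRadius Mc
      obtain ⟨r, hr1, hr2⟩ := exists_between hsr
      have hrtop : r ≠ ⊤ := (hr2.trans ENNReal.one_lt_top).ne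
      have hev : ∀ᶠ j : ℕ in atTop, (‖Mc ^ j‖₊ : ℝ≥0∞) ^ (1 / (j:ℝ)) < r :=
        hgel.eventually_lt_const hr1
      set rho : ℝ≥0 := r.toNNReal with hrho
      have hrho1 : (rho : ℝ) < 1 := by
        have : (rho : ℝ≥0∞) < 1 := by rwa [ENNReal.coe_toNNReal hrtop]
        exact_mod_cast (ENNReal.coe_lt_one_iff.mp this)
      have hpow : ∀ᶠ j : ℕ in atTop, ‖Mc ^ j‖ ≤ (rho : ℝ) ^ j := by
        filter_upwards [hev, eventually_ge_atTop 1] with j hj hj1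
        have hj0 : ((j : ℝ)) ≠ 0 := by positivity
        have h2 : ((‖Mc ^ j‖₊ : ℝ≥0∞) ^ (1 / (j:ℝ))) ^ (j : ℝ) ≤ r ^ (j : ℝ) :=
          ENNReal.rpow_le_rpow hj.le (by positivity)
        rw [← ENNReal.rpow_mul, one_div, inv_mul_cancel₀ hj0, ENNReal.rpow_one] at h2
        rw [← ENNReal.coe_toNNReal hrtop, ← ENNReal.coe_rpow_of_nonneg _ (by positivity),
          ENNReal.coe_le_coe] at h2
        have h3 : ‖Mc ^ j‖₊ ≤ rho ^ j := by
          rwa [← NNReal.rpow_natCast rho j]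
        calc ‖Mc ^ j‖ ≤ ((rho ^ j : ℝ≥0) : ℝ) := h3
          _ = (rho : ℝ) ^ j := by push_cast; ring
      intro i l
      apply squeeze_zero_norm' _ (tendsto_pow_atTop_nhds_zero_of_lt_one rho.coe_nonneg hrho1)
      filter_upwards [hpow] with j hj
      have hentry_le : ‖(Mc ^ j) i l‖ ≤ ‖Mc ^ j‖ := by
        have h1 : ‖(Mc ^ j) i l‖₊ ≤ ∑ l', ‖(Mc ^ j) i l'‖₊ :=
          Finset.single_le_sum (f := fun l' => ‖(Mc ^ j) i l'‖₊) (fun _ _ => zero_le)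
            (Finset.mem_univ l)
        have h2 : (∑ l', ‖(Mc ^ j) i l'‖₊) ≤ Finset.univ.sup fun i' => ∑ l', ‖(Mc ^ j) i' l'‖₊ :=
          Finset.le_sup (f := fun i' => ∑ l', ‖(Mc ^ j) i' l'‖₊) (Finset.mem_univ i)
        have := h1.trans h2
        rw [← Matrix.linfty_opNNNorm_def] at this
        exact this
      have habs : ‖(M ^ j) i l‖ = ‖(Mc ^ j) i l‖ := by
        rw [← map_pow_c]
        simp [Matrix.map_apply]
      rw [habs]
      exact hentry_le.trans hj
    refine tendsto_pi_nhds.mpr ?_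
    intro i
    refine tendsto_pi_nhds.mpr ?_
    intro l
    simpa using hentry i l


section quad
variable {k : Type*} [Fintype k] [DecidableEq k]

lemma quad_entry (M : Matrix k k ℝ) (i j : k) :
    Pi.single i 1 ⬝ᵥ M *ᵥ Pi.single j 1 = M i j := by
  simp [dotProduct, Matrix.mulVec_single, Pi.single_apply]

lemma quad_pair (M : Matrix k k ℝ) (hM : Mᵀ = M) (i j : k) :
    (Pi.single i 1 + Pi.single j 1) ⬝ᵥ M *ᵥ (Pi.single i 1 + Pi.single j 1)
      = M i i + M j j + 2 * M i j := by
  have hji : M j i = M i j := by conv_lhs => rw [← hM, Matrix.transpose_apply]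
  simp only [add_dotProduct, Matrix.mulVec_add, dotProduct_add, quad_entry]
  ring_nf
  rw [hji]; ring

lemma eq_zero_of_quad_zero {M : Matrix k k ℝ} (hM : Mᵀ = M)
    (h : ∀ v, v ⬝ᵥ M *ᵥ v = 0) : M = 0 := by
  ext i j
  have h1 := h (Pi.single i 1)
  have h2 := h (Pi.single j 1)
  have h3 := h (Pi.single i 1 + Pi.single j 1)
  rw [quad_pair M hM i j] at h3
  rw [quad_entry] at h1 h2
  simp only [Matrix.zero_apply]
  nlinarith [h1, h2, h3]
end quad


/-- `vᴴ (Nᴴ S N) v = (N v)ᴴ S (N v)`. -/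
lemma conj_quad {a b : Type*} [Fintype a] [Fintype b] (N : Matrix a b ℂ) (S : Matrix a a ℂ)
    (v : b → ℂ) :
    star v ⬝ᵥ (Nᴴ * S * N) *ᵥ v = star (N *ᵥ v) ⬝ᵥ S *ᵥ (N *ᵥ v) := by
  rw [← Matrix.mulVec_mulVec, ← Matrix.mulVec_mulVec, Matrix.dotProduct_mulVec,
    ← Matrix.star_mulVec]

lemma conj_quad' {a b : Type*} [Fintype a] [Fintype b] (N : Matrix a b ℂ) (v : b → ℂ) :
    star v ⬝ᵥ (Nᴴ * N) *ᵥ v = star (N *ᵥ v) ⬝ᵥ (N *ᵥ v) := by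
  rw [← Matrix.mulVec_mulVec, Matrix.dotProduct_mulVec, ← Matrix.star_mulVec]

lemma self_dot_re (w : a → ℂ) [Fintype a] :
    (star w ⬝ᵥ w).re = ∑ i, Complex.normSq (w i) := by
  rw [dotProduct, Complex.re_sum]
  refine Finset.sum_congr rfl fun i _ => ?_
  simp only [Pi.star_apply, Complex.star_def]
  rw [mul_comm, Complex.mul_conj, Complex.ofReal_re]

lemma self_dot_re_nonneg {a : Type*} [Fintype a] (w : a → ℂ) :
    0 ≤ (star w ⬝ᵥ w).re := by
  rw [self_dot_re]
  exact Finset.sum_nonneg fun i _ => Complex.normSq_nonneg _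

lemma self_dot_re_zero {a : Type*} [Fintype a] {w : a → ℂ}
    (h : (star w ⬝ᵥ w).re = 0) : w = 0 := by
  rw [self_dot_re] at h
  have := (Finset.sum_eq_zero_iff_of_nonneg
    (fun i _ => Complex.normSq_nonneg (w i))).mp h
  funext i
  exact Complex.normSq_eq_zero.mp (this i (Finset.mem_univ i))


section riccati
variable {n m : ℕ}
variable (A : Matrix (Fin n) (Fin n) ℝ) (B : Matrix (Fin n) (Fin m) ℝ)
variable (Q : Matrix (Fin n) (Fin n) ℝ) (R : Matrix (Fin m) (Fin m) ℝ)

noncomputable def ric (X : Matrix (Fin n) (Fin n) ℝ) : Matrix (Fin n) (Fin n) ℝ :=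
  Q + Aᵀ * X * A - Aᵀ * X * B * (R + Bᵀ * X * B)⁻¹ * (Bᵀ * X * A)

noncomputable def gain (X : Matrix (Fin n) (Fin n) ℝ) : Matrix (Fin m) (Fin n) ℝ :=
  (R + Bᵀ * X * B)⁻¹ * (Bᵀ * X * A)

def lyap (K : Matrix (Fin m) (Fin n) ℝ) (X : Matrix (Fin n) (Fin n) ℝ) :
    Matrix (Fin n) (Fin n) ℝ :=
  Q + Kᵀ * R * K + (A - B * K)ᵀ * X * (A - B * K)

variable {A B Q R}

lemma psd_conj {a b : ℕ} {X : Matrix (Fin a) (Fin a) ℝ} (hX : X.PosSemidef)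
    (S : Matrix (Fin a) (Fin b) ℝ) : (Sᵀ * X * S).PosSemidef := by
  have := hX.conjTranspose_mul_mul_same S
  rwa [ctR] at this

lemma G_posDef (hR : R.PosDef) {X : Matrix (Fin n) (Fin n) ℝ} (hX : X.PosSemidef) :
    (R + Bᵀ * X * B).PosDef :=
  hR.add_posSemidef (psd_conj hX B)

lemma lyap_sub_lyap (K : Matrix (Fin m) (Fin n) ℝ) (X Y : Matrix (Fin n) (Fin n) ℝ) :
    lyap A B Q R K Y - lyap A B Q R K X = (A - B * K)ᵀ * (Y - X) * (A - B * K) := by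
  simp only [lyap, Matrix.mul_sub, Matrix.sub_mul]
  abel

set_option maxHeartbeats 1000000 in
lemma lyap_eq_ric_add (hR : R.PosDef) {X : Matrix (Fin n) (Fin n) ℝ} (hX : X.PosSemidef)
    (K : Matrix (Fin m) (Fin n) ℝ) :
    lyap A B Q R K X = ric A B Q R X +
      (K - gain A B R X)ᵀ * (R + Bᵀ * X * B) * (K - gain A B R X) := by
  have hG := G_posDef (B := B) hR hX
  have hGdet : IsUnit (R + Bᵀ * X * B).det := hG.isUnit.map Matrix.detMonoidHom
  have hXT : Xᵀ = X := by rw [← ctR X, hX.isHermitian.eq]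
  have hRT : Rᵀ = R := by rw [← ctR R, hR.isHermitian.eq]
  have hGT : (R + Bᵀ * X * B)ᵀ = R + Bᵀ * X * B := by
    simp [Matrix.transpose_add, Matrix.transpose_mul, hRT, hXT, Matrix.mul_assoc]
  have hGdet' : IsUnit (R + Bᵀ * (X * B)).det := by rwa [← Matrix.mul_assoc]
  have c3 : ((R + Bᵀ * (X * B))⁻¹)ᵀ = (R + Bᵀ * (X * B))⁻¹ := by
    rw [Matrix.transpose_nonsing_inv]
    congr 1
    rw [← Matrix.mul_assoc, hGT, Matrix.mul_assoc]
  have c1 : ∀ (Z : Matrix (Fin m) (Fin n) ℝ),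
      (R + Bᵀ * (X * B)) * ((R + Bᵀ * (X * B))⁻¹ * Z) = Z := fun Z =>
    Matrix.mul_nonsing_inv_cancel_left _ _ hGdet'
  have c2 : ∀ (Z : Matrix (Fin m) (Fin n) ℝ),
      (R + Bᵀ * (X * B))⁻¹ * ((R + Bᵀ * (X * B)) * Z) = Z := fun Z =>
    Matrix.nonsing_inv_mul_cancel_left _ _ hGdet'
  simp only [lyap, ric, gain, Matrix.transpose_sub, Matrix.transpose_mul,
    Matrix.transpose_transpose, hXT, c3, Matrix.sub_mul, Matrix.mul_sub,
    Matrix.mul_assoc, c1, c2]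
  simp only [Matrix.add_mul, Matrix.mul_add, Matrix.mul_assoc]
  abel

lemma ric_eq_lyap_gain (hR : R.PosDef) {X : Matrix (Fin n) (Fin n) ℝ} (hX : X.PosSemidef) :
    ric A B Q R X = lyap A B Q R (gain A B R X) X := by
  have := lyap_eq_ric_add (A := A) (B := B) (Q := Q) hR hX (gain A B R X)
  simp only [sub_self, Matrix.zero_mul, Matrix.mul_zero] at this
  simpa using this.symm

lemma lyap_posSemidef (hQ : Q.PosSemidef) (hR : R.PosDef) {X : Matrix (Fin n) (Fin n) ℝ}
    (hX : X.PosSemidef) (K : Matrix (Fin m) (Fin n) ℝ) : (lyap A B Q R K X).PosSemidef :=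
  (hQ.add (psd_conj hR.posSemidef K)).add (psd_conj hX (A - B * K))

lemma ric_posSemidef (hQ : Q.PosSemidef) (hR : R.PosDef) {X : Matrix (Fin n) (Fin n) ℝ}
    (hX : X.PosSemidef) : (ric A B Q R X).PosSemidef := by
  rw [ric_eq_lyap_gain hR hX]
  exact lyap_posSemidef hQ hR hX _

lemma ric_monotone (hQ : Q.PosSemidef) (hR : R.PosDef) {X Y : Matrix (Fin n) (Fin n) ℝ}
    (hX : X.PosSemidef) (hY : Y.PosSemidef) (hXY : (Y - X).PosSemidef) :
    (ric A B Q R Y - ric A B Q R X).PosSemidef := by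
  have key : ric A B Q R Y - ric A B Q R X =
      (A - B * gain A B R Y)ᵀ * (Y - X) * (A - B * gain A B R Y) +
        (gain A B R Y - gain A B R X)ᵀ * (R + Bᵀ * X * B) * (gain A B R Y - gain A B R X) := by
    have h1 : ric A B Q R Y = lyap A B Q R (gain A B R Y) Y := ric_eq_lyap_gain hR hY
    have h2 : lyap A B Q R (gain A B R Y) X = ric A B Q R X +
        (gain A B R Y - gain A B R X)ᵀ * (R + Bᵀ * X * B) * (gain A B R Y - gain A B R X) :=
      lyap_eq_ric_add hR hX _
    have h3 := lyap_sub_lyap (A := A) (B := B) (Q := Q) (R := R) (gain A B R Y) X Y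
    have h2' : ric A B Q R X = lyap A B Q R (gain A B R Y) X -
        (gain A B R Y - gain A B R X)ᵀ * (R + Bᵀ * X * B) * (gain A B R Y - gain A B R X) := by
      rw [h2]; abel
    rw [h1, h2', ← h3]
    abel
  rw [key]
  exact (psd_conj hXY _).add (psd_conj (G_posDef hR hX).posSemidef _)
end riccati

section stability
variable {n m p : ℕ} {A : Matrix (Fin n) (Fin n) ℝ} {B : Matrix (Fin n) (Fin m) ℝ}
  {R : Matrix (Fin m) (Fin m) ℝ}

lemma vec_zero_of_quad_nonpos (hR : R.PosDef) {u : Fin m → ℂ}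
    (h : (star u ⬝ᵥ (R.map Complex.ofReal) *ᵥ u).re ≤ 0) : u = 0 := by
  have h0 := quad_zero hR.posSemidef h
  by_contra hu
  have hdet : (R.map Complex.ofReal).det = 0 :=
    Matrix.exists_mulVec_eq_zero_iff.mp ⟨u, hu, h0⟩
  have hdet2 : (R.map Complex.ofReal).det = Complex.ofReal R.det := by
    exact (RingHom.map_det Complex.ofRealHom R).symm
  rw [hdet2] at hdet
  exact Complex.ofReal_ne_zero.mpr hR.det_pos.ne' hdet

lemma stable_of_detectable (hR : R.PosDef) {K : Matrix (Fin m) (Fin n) ℝ}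
    {C : Matrix (Fin p) (Fin n) ℝ} {X : Matrix (Fin n) (Fin n) ℝ} (hX : X.PosSemidef)
    (heq : X = Cᵀ * C + Kᵀ * R * K + (A - B * K)ᵀ * X * (A - B * K))
    {L : Matrix (Fin n) (Fin p) ℝ} (hL : specRad (A + L * C) < 1) :
    specRad (A - B * K) < 1 := by
  by_contra hcon
  push_neg at hcon
  have hfin : ((fun z => ‖z‖) '' spectrum ℂ ((A - B * K).map Complex.ofReal)).Finite :=
    ((A - B * K).map Complex.ofReal).finite_spectrum.image _
  have hne : ((fun z => ‖z‖) ''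
      spectrum ℂ ((A - B * K).map Complex.ofReal)).Nonempty := by
    by_contra hemp
    rw [Set.not_nonempty_iff_eq_empty] at hemp
    rw [specRad, hemp, Real.sSup_empty] at hcon
    linarith
  obtain ⟨lam, hlam, hlameq0⟩ := hne.csSup_mem hfin
  have hlameq : ‖lam‖ = specRad (A - B * K) := hlameq0
  obtain ⟨v, hv0, hveig⟩ := (mem_spectrum_iff_eigen _ _).mp hlam
  have habs1 : 1 ≤ ‖lam‖ := by rw [hlameq]; exact hcon
  have hnsq : 1 ≤ Complex.normSq lam := by
    have := Complex.sq_norm lam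
    nlinarith
  -- complexified Lyapunov identity
  have heqc : X.map Complex.ofReal =
      (C.map Complex.ofReal)ᴴ * C.map Complex.ofReal +
      (K.map Complex.ofReal)ᴴ * R.map Complex.ofReal * K.map Complex.ofReal +
      ((A - B * K).map Complex.ofReal)ᴴ * X.map Complex.ofReal *
        ((A - B * K).map Complex.ofReal) := by
    conv_lhs => rw [heq]
    rw [map_add_c, map_add_c, map_mulc, map_mulc, map_mulc, map_mulc, map_mulc,
      map_transpose_c, map_transpose_c, map_transpose_c]
  -- quadratic form at the eigenvector
  have hqc := congrArg (fun M => star v ⬝ᵥ M *ᵥ v) heqc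
  simp only [Matrix.add_mulVec, dotProduct_add] at hqc
  rw [conj_quad' (C.map Complex.ofReal) v,
    conj_quad (K.map Complex.ofReal) (R.map Complex.ofReal) v,
    conj_quad ((A - B * K).map Complex.ofReal) (X.map Complex.ofReal) v] at hqc
  have heig : star (((A - B * K).map Complex.ofReal) *ᵥ v) ⬝ᵥ
        (X.map Complex.ofReal) *ᵥ (((A - B * K).map Complex.ofReal) *ᵥ v)
      = (Complex.normSq lam : ℂ) * (star v ⬝ᵥ (X.map Complex.ofReal) *ᵥ v) := by
    rw [hveig]
    rw [star_smul, Matrix.mulVec_smul, smul_dotProduct, dotProduct_smul]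
    rw [smul_eq_mul, smul_eq_mul, ← mul_assoc]
    congr 1
    rw [Complex.star_def]
    exact Complex.normSq_eq_conj_mul_self.symm
  rw [heig] at hqc
  have hq := congrArg Complex.re hqc
  simp only [Complex.add_re] at hq
  rw [show ((Complex.normSq lam : ℂ) * (star v ⬝ᵥ (X.map Complex.ofReal) *ᵥ v)).re
      = Complex.normSq lam * (star v ⬝ᵥ (X.map Complex.ofReal) *ᵥ v).re by
    rw [Complex.mul_re]; simp] at hq
  have hXq : 0 ≤ (star v ⬝ᵥ (X.map Complex.ofReal) *ᵥ v).re := by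
    simpa using (Complex.le_def.mp ((psd_map hX).dotProduct_mulVec_nonneg v)).1
  have hCq : 0 ≤ (star ((C.map Complex.ofReal) *ᵥ v) ⬝ᵥ ((C.map Complex.ofReal) *ᵥ v)).re :=
    self_dot_re_nonneg _
  have hKq : 0 ≤ (star ((K.map Complex.ofReal) *ᵥ v) ⬝ᵥ
      (R.map Complex.ofReal) *ᵥ ((K.map Complex.ofReal) *ᵥ v)).re := by
    simpa using (Complex.le_def.mp ((psd_map hR.posSemidef).dotProduct_mulVec_nonneg ((K.map Complex.ofReal) *ᵥ v))).1
  have hCq0 : (star ((C.map Complex.ofReal) *ᵥ v) ⬝ᵥ ((C.map Complex.ofReal) *ᵥ v)).re = 0 := by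
    nlinarith
  have hKq0 : (star ((K.map Complex.ofReal) *ᵥ v) ⬝ᵥ
      (R.map Complex.ofReal) *ᵥ ((K.map Complex.ofReal) *ᵥ v)).re ≤ 0 := by
    nlinarith
  have hCv : (C.map Complex.ofReal) *ᵥ v = 0 := self_dot_re_zero hCq0
  have hKv : (K.map Complex.ofReal) *ᵥ v = 0 := vec_zero_of_quad_nonpos hR hKq0
  have hAv : (A.map Complex.ofReal) *ᵥ v = lam • v := by
    have hsplit : ((A - B * K).map Complex.ofReal) *ᵥ v =
        (A.map Complex.ofReal) *ᵥ v -
          (B.map Complex.ofReal) *ᵥ ((K.map Complex.ofReal) *ᵥ v) := by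
      rw [map_sub_c, Matrix.sub_mulVec, map_mulc, ← Matrix.mulVec_mulVec]
    rw [hsplit, hKv, Matrix.mulVec_zero, sub_zero] at hveig
    exact hveig
  have hmem2 : lam ∈ spectrum ℂ ((A + L * C).map Complex.ofReal) := by
    rw [mem_spectrum_iff_eigen]
    refine ⟨v, hv0, ?_⟩
    rw [map_add_c, Matrix.add_mulVec, map_mulc, ← Matrix.mulVec_mulVec, hCv,
      Matrix.mulVec_zero, add_zero, hAv]
  have := abs_le_specRad hmem2
  linarith
end stability


/-- Convergence of Riccati value iteration to a PSD solution of the ARE, assuming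
detectability. -/
lemma riccati_vi_convergence {n m p : ℕ} {A : Matrix (Fin n) (Fin n) ℝ}
    {B : Matrix (Fin n) (Fin m) ℝ} {Q : Matrix (Fin n) (Fin n) ℝ}
    {R : Matrix (Fin m) (Fin m) ℝ} (hQ : Q.PosSemidef) (hR : R.PosDef)
    {C : Matrix (Fin p) (Fin n) ℝ} (hQC : Q = Cᵀ * C)
    {L : Matrix (Fin n) (Fin p) ℝ} (hL : specRad (A + L * C) < 1)
    {Xs : Matrix (Fin n) (Fin n) ℝ} (hXs : Xs.PosSemidef) (hric : Xs = ric A B Q R Xs)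
    (X : ℕ → Matrix (Fin n) (Fin n) ℝ) (hX0 : X 0 = 0)
    (hXrec : ∀ k, X (k + 1) = ric A B Q R (X k)) :
    Tendsto X atTop (nhds Xs) := by
  classical
  -- basic facts about the iterates
  have hXpsd : ∀ k, (X k).PosSemidef := by
    intro k
    induction k with
    | zero => rw [hX0]; exact Matrix.PosSemidef.zero
    | succ k ih => rw [hXrec]; exact ric_posSemidef hQ hR ih
  have hsymm : ∀ k, (X k)ᵀ = X k := fun k => by rw [← ctR]; exact (hXpsd k).1
  have hmono : ∀ k, (X (k + 1) - X k).PosSemidef := by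
    intro k
    induction k with
    | zero =>
      rw [hXrec, hX0, sub_zero]
      exact ric_posSemidef hQ hR Matrix.PosSemidef.zero
    | succ k ih =>
      have h := ric_monotone (A := A) (B := B) hQ hR (hXpsd k) (hXpsd (k + 1)) ih
      rw [← hXrec k, ← hXrec (k + 1)] at h
      exact h
  have hbd : ∀ k, (Xs - X k).PosSemidef := by
    intro k
    induction k with
    | zero => rw [hX0, sub_zero]; exact hXs
    | succ k ih =>
      have h := ric_monotone (A := A) (B := B) hQ hR (hXpsd k) hXs ih
      rw [← hric, ← hXrec] at h
      exact h
  -- monotone bounded quadratic forms converge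
  have hqmono : ∀ v : Fin n → ℝ, Monotone fun k => v ⬝ᵥ X k *ᵥ v := by
    intro v
    apply monotone_nat_of_le_succ
    intro k
    have := (hmono k).dotProduct_mulVec_nonneg v
    simp only [star_trivial, Matrix.sub_mulVec, dotProduct_sub] at this
    linarith
  have hqbd : ∀ v : Fin n → ℝ, ∀ k, v ⬝ᵥ X k *ᵥ v ≤ v ⬝ᵥ Xs *ᵥ v := by
    intro v k
    have := (hbd k).dotProduct_mulVec_nonneg v
    simp only [star_trivial, Matrix.sub_mulVec, dotProduct_sub] at this
    linarith
  have hqlim : ∀ v : Fin n → ℝ,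
      Tendsto (fun k => v ⬝ᵥ X k *ᵥ v) atTop (nhds (⨆ k, v ⬝ᵥ X k *ᵥ v)) := by
    intro v
    exact tendsto_atTop_ciSup (hqmono v) ⟨v ⬝ᵥ Xs *ᵥ v, by rintro x ⟨k, rfl⟩; exact hqbd v k⟩
  -- the candidate limit
  set Xinf : Matrix (Fin n) (Fin n) ℝ := Matrix.of fun i j =>
    ((⨆ k, (Pi.single i 1 + Pi.single j 1) ⬝ᵥ X k *ᵥ (Pi.single i 1 + Pi.single j 1)) -
      (⨆ k, (Pi.single i 1 : Fin n → ℝ) ⬝ᵥ X k *ᵥ Pi.single i 1) -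
      (⨆ k, (Pi.single j 1 : Fin n → ℝ) ⬝ᵥ X k *ᵥ Pi.single j 1)) / 2 with hXinfdef
  have hent : ∀ i j, Tendsto (fun k => X k i j) atTop (nhds (Xinf i j)) := by
    intro i j
    have hrepr : ∀ k, X k i j =
        ((Pi.single i 1 + Pi.single j 1) ⬝ᵥ X k *ᵥ (Pi.single i 1 + Pi.single j 1) -
          (Pi.single i 1 : Fin n → ℝ) ⬝ᵥ X k *ᵥ Pi.single i 1 -
          (Pi.single j 1 : Fin n → ℝ) ⬝ᵥ X k *ᵥ Pi.single j 1) / 2 := by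
      intro k
      rw [quad_pair _ (hsymm k), quad_entry, quad_entry]
      ring
    simp only [hrepr]
    have : Xinf i j =
        ((⨆ k, (Pi.single i 1 + Pi.single j 1) ⬝ᵥ X k *ᵥ (Pi.single i 1 + Pi.single j 1)) -
          (⨆ k, (Pi.single i 1 : Fin n → ℝ) ⬝ᵥ X k *ᵥ Pi.single i 1) -
          (⨆ k, (Pi.single j 1 : Fin n → ℝ) ⬝ᵥ X k *ᵥ Pi.single j 1)) / 2 := rfl
    rw [this]
    exact (((hqlim _).sub (hqlim _)).sub (hqlim _)).div_const 2
  have htends : Tendsto X atTop (nhds Xinf) := by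
    refine tendsto_pi_nhds.mpr ?_
    intro i
    refine tendsto_pi_nhds.mpr ?_
    intro j
    exact hent i j
  -- quadratic forms converge to the quadratic form of the limit
  have hquadcont : ∀ v : Fin n → ℝ,
      Tendsto (fun k => v ⬝ᵥ X k *ᵥ v) atTop (nhds (v ⬝ᵥ Xinf *ᵥ v)) := by
    intro v
    have hc : Continuous fun M : Matrix (Fin n) (Fin n) ℝ => v ⬝ᵥ M *ᵥ v :=
      continuous_const.dotProduct (continuous_id.matrix_mulVec continuous_const)
    exact (hc.continuousAt).tendsto.comp htends
  have hXinfsym : Xinfᵀ = Xinf := by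
    ext i j
    show Xinf j i = Xinf i j
    rw [hXinfdef]
    simp only [Matrix.of_apply]
    rw [add_comm (Pi.single j 1) (Pi.single i 1)]
    ring
  have hXinfpsd : Xinf.PosSemidef := by
    refine Matrix.PosSemidef.of_dotProduct_mulVec_nonneg ?_ ?_
    · rw [Matrix.IsHermitian, ctR]; exact hXinfsym
    · intro v
      rw [star_trivial]
      exact ge_of_tendsto (hquadcont v) (Eventually.of_forall fun k => by
        simpa using (hXpsd k).dotProduct_mulVec_nonneg v)
  have hbdinf : (Xs - Xinf).PosSemidef := by
    refine Matrix.PosSemidef.of_dotProduct_mulVec_nonneg ?_ ?_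
    · rw [Matrix.IsHermitian, ctR, Matrix.transpose_sub, hXinfsym]
      rw [show Xsᵀ = Xs from by rw [← ctR]; exact hXs.1]
    · intro v
      rw [star_trivial]
      simp only [Matrix.sub_mulVec, dotProduct_sub, sub_nonneg]
      exact le_of_tendsto (hquadcont v) (Eventually.of_forall fun k => hqbd v k)
  -- the limit is a fixed point of the Riccati operator
  have hGdetne : (R + Bᵀ * Xinf * B).det ≠ 0 := (G_posDef hR hXinfpsd).det_pos.ne'
  have hGc : Tendsto (fun k => R + Bᵀ * X k * B) atTop (nhds (R + Bᵀ * Xinf * B)) := by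
    have hc : Continuous fun M : Matrix (Fin n) (Fin n) ℝ => R + Bᵀ * M * B :=
      continuous_const.add ((continuous_const.matrix_mul continuous_id).matrix_mul
        continuous_const)
    exact (hc.continuousAt).tendsto.comp htends
  have hinv : Tendsto (fun k => (R + Bᵀ * X k * B)⁻¹) atTop
      (nhds ((R + Bᵀ * Xinf * B)⁻¹)) := by
    have hcinv : ContinuousAt Inv.inv (R + Bᵀ * Xinf * B) := by
      apply continuousAt_matrix_inv
      have : ContinuousAt (fun t : ℝ => Ring.inverse t) ((R + Bᵀ * Xinf * B).det) := by
        simp only [Ring.inverse_eq_inv']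
        exact continuousAt_inv₀ hGdetne
      exact this
    exact hcinv.tendsto.comp hGc
  have hpair : Tendsto (fun k => (X k, (R + Bᵀ * X k * B)⁻¹)) atTop
      (nhds (Xinf, (R + Bᵀ * Xinf * B)⁻¹)) := htends.prodMk_nhds hinv
  have hgc : Continuous fun z : Matrix (Fin n) (Fin n) ℝ × Matrix (Fin m) (Fin m) ℝ =>
      Q + Aᵀ * z.1 * A - Aᵀ * z.1 * B * z.2 * (Bᵀ * z.1 * A) := by
    apply Continuous.sub
    · exact continuous_const.add ((continuous_const.matrix_mul continuous_fst).matrix_mul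
        continuous_const)
    · exact ((((continuous_const.matrix_mul continuous_fst).matrix_mul
        continuous_const).matrix_mul continuous_snd).matrix_mul
        ((continuous_const.matrix_mul continuous_fst).matrix_mul continuous_const))
  have h2 : Tendsto (fun k => ric A B Q R (X k)) atTop (nhds (ric A B Q R Xinf)) := by
    have := (hgc.continuousAt).tendsto.comp hpair
    simpa only [ric, Function.comp_def] using this
  have h1 : Tendsto (fun k => ric A B Q R (X k)) atTop (nhds Xinf) := by
    have := htends.comp (tendsto_add_atTop_nat 1)
    simp only [Function.comp_def, hXrec] at this
    exact this
  have hfix : Xinf = ric A B Q R Xinf := tendsto_nhds_unique h1 h2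
  -- the limit satisfies a Lyapunov identity; detectability gives stability
  have hlyapinf : Xinf = Cᵀ * C + (gain A B R Xinf)ᵀ * R * gain A B R Xinf +
      (A - B * gain A B R Xinf)ᵀ * Xinf * (A - B * gain A B R Xinf) := by
    conv_lhs => rw [hfix, ric_eq_lyap_gain hR hXinfpsd]
    rw [lyap, hQC]
  have hstable : specRad (A - B * gain A B R Xinf) < 1 :=
    stable_of_detectable hR hXinfpsd hlyapinf hL
  -- the gap to Xs satisfies a Lyapunov inequality, hence vanishes
  have hkey : ((A - B * gain A B R Xinf)ᵀ * (Xs - Xinf) * (A - B * gain A B R Xinf) -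
      (Xs - Xinf)).PosSemidef := by
    have e1 := lyap_sub_lyap (A := A) (B := B) (Q := Q) (R := R) (gain A B R Xinf) Xinf Xs
    have e2 := lyap_eq_ric_add (A := A) (B := B) (Q := Q) hR hXs (gain A B R Xinf)
    have e3 := (ric_eq_lyap_gain (A := A) (B := B) (Q := Q) hR hXinfpsd).symm
    have hrw : (A - B * gain A B R Xinf)ᵀ * (Xs - Xinf) * (A - B * gain A B R Xinf) -
        (Xs - Xinf) =
        (gain A B R Xinf - gain A B R Xs)ᵀ * (R + Bᵀ * Xs * B) *
          (gain A B R Xinf - gain A B R Xs) := by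
      rw [← e1, e2, e3, ← hric, ← hfix]
      abel
    rw [hrw]
    exact psd_conj (G_posDef hR hXs).posSemidef _
  have hiter : ∀ j : ℕ,
      (((A - B * gain A B R Xinf) ^ j)ᵀ * (Xs - Xinf) * ((A - B * gain A B R Xinf) ^ j) -
        (Xs - Xinf)).PosSemidef := by
    intro j
    induction j with
    | zero =>
      simp only [pow_zero, Matrix.transpose_one, Matrix.one_mul, Matrix.mul_one, sub_self]
      exact Matrix.PosSemidef.zero
    | succ j ih =>
      have hconj := psd_conj hkey ((A - B * gain A B R Xinf) ^ j)
      have hre : ((A - B * gain A B R Xinf) ^ j)ᵀ *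
          ((A - B * gain A B R Xinf)ᵀ * (Xs - Xinf) * (A - B * gain A B R Xinf) -
            (Xs - Xinf)) * ((A - B * gain A B R Xinf) ^ j) =
          ((A - B * gain A B R Xinf) ^ (j + 1))ᵀ * (Xs - Xinf) *
            ((A - B * gain A B R Xinf) ^ (j + 1)) -
          ((A - B * gain A B R Xinf) ^ j)ᵀ * (Xs - Xinf) * ((A - B * gain A B R Xinf) ^ j) := by
        rw [pow_succ']
        simp only [Matrix.transpose_mul, Matrix.transpose_sub, Matrix.mul_sub, Matrix.sub_mul,
          Matrix.mul_assoc]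
      rw [hre] at hconj
      have hsum := hconj.add ih
      have : ((A - B * gain A B R Xinf) ^ (j + 1))ᵀ * (Xs - Xinf) *
            ((A - B * gain A B R Xinf) ^ (j + 1)) -
          ((A - B * gain A B R Xinf) ^ j)ᵀ * (Xs - Xinf) * ((A - B * gain A B R Xinf) ^ j) +
          (((A - B * gain A B R Xinf) ^ j)ᵀ * (Xs - Xinf) * ((A - B * gain A B R Xinf) ^ j) -
            (Xs - Xinf)) =
          ((A - B * gain A B R Xinf) ^ (j + 1))ᵀ * (Xs - Xinf) *
            ((A - B * gain A B R Xinf) ^ (j + 1)) - (Xs - Xinf) := by abel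
      rwa [this] at hsum
  have hzero : ∀ v : Fin n → ℝ, v ⬝ᵥ (Xs - Xinf) *ᵥ v = 0 := by
    intro v
    have hle : ∀ j : ℕ, v ⬝ᵥ (Xs - Xinf) *ᵥ v ≤
        v ⬝ᵥ (((A - B * gain A B R Xinf) ^ j)ᵀ * (Xs - Xinf) *
          ((A - B * gain A B R Xinf) ^ j)) *ᵥ v := by
      intro j
      have := (hiter j).dotProduct_mulVec_nonneg v
      simp only [star_trivial, Matrix.sub_mulVec, dotProduct_sub] at this ⊢
      linarith
    have htendzero : Tendsto (fun j : ℕ => v ⬝ᵥ (((A - B * gain A B R Xinf) ^ j)ᵀ *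
        (Xs - Xinf) * ((A - B * gain A B R Xinf) ^ j)) *ᵥ v) atTop (nhds 0) := by
      have hc : Continuous fun M : Matrix (Fin n) (Fin n) ℝ =>
          v ⬝ᵥ (Mᵀ * (Xs - Xinf) * M) *ᵥ v :=
        continuous_const.dotProduct
          ((((continuous_id.matrix_transpose).matrix_mul continuous_const).matrix_mul
            continuous_id).matrix_mulVec continuous_const)
      have := (hc.continuousAt).tendsto.comp (pow_tendsto_zero hstable)
      simp only [Function.comp_def] at this
      simpa using this
    have hle0 : v ⬝ᵥ (Xs - Xinf) *ᵥ v ≤ 0 :=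
      ge_of_tendsto htendzero (Eventually.of_forall hle)
    have hge0 : 0 ≤ v ⬝ᵥ (Xs - Xinf) *ᵥ v := by simpa using hbdinf.dotProduct_mulVec_nonneg v
    linarith
  have hDsym : (Xs - Xinf)ᵀ = Xs - Xinf := by rw [← ctR]; exact hbdinf.1
  have hfin : Xs - Xinf = 0 := eq_zero_of_quad_zero hDsym hzero
  have hXsinf : Xinf = Xs := by
    have := sub_eq_zero.mp hfin
    exact this.symm
  rw [← hXsinf]
  exact htends


end ValueIterAux

open ValueIterAux in
/-- Convergence of data-driven (Q-)value iteration: the iterates `P_k` of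
`P_{k+1} = Λ + Tᵀ·(P_{k,11} − P_{k,12}·P_{k,22}⁻¹·P_{k,12}ᵀ)·T`, started from `P₀ = 0`,
converge to the optimal Q-function matrix `P*` built from the stabilizing solution `X*`
of the algebraic Riccati equation. -/
theorem value_iteration_convergence {n m p : ℕ}
    (A : Matrix (Fin n) (Fin n) ℝ) (B : Matrix (Fin n) (Fin m) ℝ)
    (Q : Matrix (Fin n) (Fin n) ℝ) (hQ : Q.PosSemidef)
    (R : Matrix (Fin m) (Fin m) ℝ) (hR : R.PosDef)
    (hstab : ∃ F : Matrix (Fin m) (Fin n) ℝ, specRad (A + B * F) < 1)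
    (C : Matrix (Fin p) (Fin n) ℝ) (hQC : Q = Cᵀ * C)
    (hdet : ∃ L : Matrix (Fin n) (Fin p) ℝ, specRad (A + L * C) < 1)
    (Xs : Matrix (Fin n) (Fin n) ℝ) (hXs : Xs.PosSemidef)
    (hriccati : Xs =
      Aᵀ * Xs * A - Aᵀ * Xs * B * (R + Bᵀ * Xs * B)⁻¹ * (Bᵀ * Xs * A) + Q)
    (P : ℕ → Matrix (Fin n ⊕ Fin m) (Fin n ⊕ Fin m) ℝ)
    (hP0 : P 0 = 0)
    (hPrec : ∀ k, P (k + 1) =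
      Matrix.fromBlocks Q 0 0 R +
        (Matrix.fromCols A B)ᵀ *
          (Matrix.toBlocks₁₁ (P k) -
            Matrix.toBlocks₁₂ (P k) * (Matrix.toBlocks₂₂ (P k))⁻¹ *
              (Matrix.toBlocks₁₂ (P k))ᵀ) *
          (Matrix.fromCols A B)) :
    Tendsto P atTop (nhds
      (Matrix.fromBlocks (Q + Aᵀ * Xs * A) (Aᵀ * Xs * B)
        (Bᵀ * Xs * A) (R + Bᵀ * Xs * B))) := by
  classical
  obtain ⟨L, hL⟩ := hdet
  have hric : Xs = ric A B Q R Xs := by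
    rw [ric]
    conv_lhs => rw [hriccati]
    abel
  -- the Riccati value iterates
  set X : ℕ → Matrix (Fin n) (Fin n) ℝ :=
    fun k => Nat.rec (motive := fun _ => Matrix (Fin n) (Fin n) ℝ) 0
      (fun _ Xk => ric A B Q R Xk) k with hXdef
  have hX0 : X 0 = 0 := rfl
  have hXrec : ∀ k, X (k + 1) = ric A B Q R (X k) := fun k => rfl
  have hXpsd : ∀ k, (X k).PosSemidef := by
    intro k
    induction k with
    | zero => rw [hX0]; exact Matrix.PosSemidef.zero
    | succ k ih => rw [hXrec]; exact ric_posSemidef hQ hR ih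
  have hsymm : ∀ k, (X k)ᵀ = X k := fun k => by rw [← ctR]; exact (hXpsd k).1
  have hconv : Tendsto X atTop (nhds Xs) :=
    riccati_vi_convergence hQ hR hQC hL hXs hric X hX0 hXrec
  -- Schur complements of the iterates
  have hS : ∀ k, Matrix.toBlocks₁₁ (P k) -
      Matrix.toBlocks₁₂ (P k) * (Matrix.toBlocks₂₂ (P k))⁻¹ * (Matrix.toBlocks₁₂ (P k))ᵀ
      = X k ∧ (k = 0 ∨ P k = Matrix.fromBlocks (Q + Aᵀ * X (k - 1) * A) (Aᵀ * X (k - 1) * B)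
        (Bᵀ * X (k - 1) * A) (R + Bᵀ * X (k - 1) * B)) := by
    intro k
    induction k with
    | zero =>
      constructor
      · have t11 : Matrix.toBlocks₁₁ (P 0) = (0 : Matrix (Fin n) (Fin n) ℝ) := by
          rw [hP0]; ext i j; rfl
        have t12 : Matrix.toBlocks₁₂ (P 0) = (0 : Matrix (Fin n) (Fin m) ℝ) := by
          rw [hP0]; ext i j; rfl
        rw [t11, t12, hX0]
        simp
      · exact Or.inl rfl
    | succ k ih =>
      have hPk : P (k + 1) = Matrix.fromBlocks (Q + Aᵀ * X k * A) (Aᵀ * X k * B)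
          (Bᵀ * X k * A) (R + Bᵀ * X k * B) := by
        rw [hPrec k, ih.1]
        rw [Matrix.transpose_fromCols, Matrix.fromRows_mul, Matrix.fromRows_mul_fromCols]
        rw [show (Matrix.fromBlocks Q 0 0 R : Matrix (Fin n ⊕ Fin m) (Fin n ⊕ Fin m) ℝ) +
            Matrix.fromBlocks (Aᵀ * X k * A) (Aᵀ * X k * B) (Bᵀ * X k * A) (Bᵀ * X k * B) =
            Matrix.fromBlocks (Q + Aᵀ * X k * A) (0 + Aᵀ * X k * B) (0 + Bᵀ * X k * A)
              (R + Bᵀ * X k * B) from Matrix.fromBlocks_add ..]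
        rw [zero_add, zero_add]
      refine ⟨?_, Or.inr (by simpa using hPk)⟩
      rw [hPk]
      simp only [Matrix.toBlocks_fromBlocks₁₁, Matrix.toBlocks_fromBlocks₁₂,
        Matrix.toBlocks_fromBlocks₂₂]
      rw [hXrec k, ric]
      rw [show (Aᵀ * X k * B)ᵀ = Bᵀ * X k * A from by
        simp only [Matrix.transpose_mul, Matrix.transpose_transpose, hsymm k,
          Matrix.mul_assoc]]
  -- convergence of the block iterates
  have hcont : Continuous fun Y : Matrix (Fin n) (Fin n) ℝ =>
      Matrix.fromBlocks (Q + Aᵀ * Y * A) (Aᵀ * Y * B) (Bᵀ * Y * A) (R + Bᵀ * Y * B) := by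
    apply Continuous.matrix_fromBlocks
    · exact continuous_const.add ((continuous_const.matrix_mul continuous_id).matrix_mul
        continuous_const)
    · exact (continuous_const.matrix_mul continuous_id).matrix_mul continuous_const
    · exact (continuous_const.matrix_mul continuous_id).matrix_mul continuous_const
    · exact continuous_const.add ((continuous_const.matrix_mul continuous_id).matrix_mul
        continuous_const)
  have h3 : Tendsto (fun k => P (k + 1)) atTop (nhds
      (Matrix.fromBlocks (Q + Aᵀ * Xs * A) (Aᵀ * Xs * B)
        (Bᵀ * Xs * A) (R + Bᵀ * Xs * B))) := by
    have hpk : ∀ k, P (k + 1) = Matrix.fromBlocks (Q + Aᵀ * X k * A) (Aᵀ * X k * B)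
        (Bᵀ * X k * A) (R + Bᵀ * X k * B) := by
      intro k
      rcases (hS (k + 1)).2 with h | h
      · exact absurd h (Nat.succ_ne_zero k)
      · simpa using h
    simp only [hpk]
    exact (hcont.continuousAt).tendsto.comp hconv
  exact (tendsto_add_atTop_iff_nat 1).mp h3
end
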